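/- For every cost C ≥ 0 and every distortion level D ∈ [0, D_max(C)], the minimum defining R(D,C) is attained by a conditional pmf P_{T|X} for which the distortion constraint holds with equality, i.e., E[d(X,T(Y))] = D. -/

import Mathlib

open Finset

noncomputable section

/-- A probability mass function on a finite alphabet. -/
def IsPMF {α : Type} [Fintype α] (p : α → ℝ) : Prop :=
  (∀ a, 0 ≤ p a) ∧ ∑ a, p a = 1

/-- A conditional probability mass function. -/
def IsCondPMF {α β : Type} [Fintype α] [Fintype β] (p : α → β → ℝ) : Prop :=
  ∀ a, IsPMF (p a)

/-- A Shannon strategy: an estimate function `Y → Xh` together with an action in `A`. -/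
abbrev Strat (Y Xh A : Type) : Type := (Y → Xh) × A

variable {X Y A Xh : Type} [Fintype X] [Fintype Y] [Fintype A] [Fintype Xh]
  [DecidableEq X] [DecidableEq Y] [DecidableEq A] [DecidableEq Xh]


/-- Joint pmf `P_{X,Y,T}(x,y,t) = P_X(x) P_{T|X}(t|x) P_{Y|X,A}(y|x,a(t))`. -/
def pXYT (PX : X → ℝ) (PW : A → X → Y → ℝ) (PT : X → Strat Y Xh A → ℝ)
    (x : X) (y : Y) (t : Strat Y Xh A) : ℝ :=
  PX x * PT x t * PW t.2 x y

/-- Action marginal `P_A`. -/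
def pA (PX : X → ℝ) (PT : X → Strat Y Xh A → ℝ) (a : A) : ℝ :=
  ∑ x, ∑ t, if t.2 = a then PX x * PT x t else 0

/-- Marginal `P_{X,A}`. -/
def pXA (PX : X → ℝ) (PT : X → Strat Y Xh A → ℝ) (x : X) (a : A) : ℝ :=
  ∑ t, if t.2 = a then PX x * PT x t else 0

/-- Marginal `P_{Y,A}`. -/
def pYA (PX : X → ℝ) (PW : A → X → Y → ℝ) (PT : X → Strat Y Xh A → ℝ)
    (y : Y) (a : A) : ℝ :=
  ∑ x, ∑ t, if t.2 = a then pXYT PX PW PT x y t else 0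

/-- Marginal `P_{X,Y,A}`. -/
def pXYA (PX : X → ℝ) (PW : A → X → Y → ℝ) (PT : X → Strat Y Xh A → ℝ)
    (x : X) (y : Y) (a : A) : ℝ :=
  ∑ t, if t.2 = a then pXYT PX PW PT x y t else 0

/-- Marginal `P_{Y,T}`. -/
def pYT (PX : X → ℝ) (PW : A → X → Y → ℝ) (PT : X → Strat Y Xh A → ℝ)
    (y : Y) (t : Strat Y Xh A) : ℝ :=
  ∑ x, pXYT PX PW PT x y t

/-- Mutual information `I(X; a(T))` (base-2 logarithms). -/
def IXA (PX : X → ℝ) (PT : X → Strat Y Xh A → ℝ) : ℝ :=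
  ∑ x, ∑ a, pXA PX PT x a * Real.logb 2 (pXA PX PT x a / (PX x * pA PX PT a))

/-- Conditional mutual information `I(X; T | Y, a(T))` (base-2 logarithms). -/
def IXTcondYA (PX : X → ℝ) (PW : A → X → Y → ℝ) (PT : X → Strat Y Xh A → ℝ) : ℝ :=
  ∑ x, ∑ y, ∑ t, pXYT PX PW PT x y t *
    Real.logb 2 (pXYT PX PW PT x y t * pYA PX PW PT y t.2 /
      (pXYA PX PW PT x y t.2 * pYT PX PW PT y t))

/-- Average distortion `E[d(X, T(Y))]`. -/
def expDist (PX : X → ℝ) (PW : A → X → Y → ℝ) (dist : X → Xh → ℝ)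
    (PT : X → Strat Y Xh A → ℝ) : ℝ :=
  ∑ x, ∑ y, ∑ t, pXYT PX PW PT x y t * dist x (t.1 y)

/-- Average action cost `E[Δ(a(T))]`. -/
def expCost (PX : X → ℝ) (cost : A → ℝ) (PT : X → Strat Y Xh A → ℝ) : ℝ :=
  ∑ x, ∑ t, PX x * PT x t * cost t.2

/-- The rate-distortion-cost function in the Shannon-strategy formulation. -/
def RDC (PX : X → ℝ) (PW : A → X → Y → ℝ) (dist : X → Xh → ℝ) (cost : A → ℝ)
    (D C : ℝ) : ℝ :=
  sInf { r : ℝ | ∃ PT : X → Strat Y Xh A → ℝ, IsCondPMF PT ∧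
    expDist PX PW dist PT ≤ D ∧ expCost PX cost PT ≤ C ∧
    r = IXA PX PT + IXTcondYA PX PW PT }
/-- `D_max(C)`: the minimum average distortion achievable with actions chosen
independently of the source, under average cost at most `C`. -/
def Dmax (PX : X → ℝ) (PW : A → X → Y → ℝ) (dist : X → Xh → ℝ) (cost : A → ℝ)
    (C : ℝ) : ℝ :=
  sInf { v : ℝ | ∃ pT : Strat Y Xh A → ℝ, IsPMF pT ∧
    (∑ t, cost t.2 * pT t) ≤ C ∧
    v = ∑ t, ∑ x, ∑ y, PX x * pT t * PW t.2 x y * dist x (t.1 y) }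
namespace RDAux
set_option linter.unusedSectionVars false

lemma two_logb_pos : (0:ℝ) < Real.log 2 := Real.log_pos one_lt_two

/-- Gibbs' inequality. -/
lemma gibbs {ι : Type*} [Fintype ι] (p q : ι → ℝ) (hp : ∀ i, 0 ≤ p i) (hq : ∀ i, 0 ≤ q i)
    (hsupp : ∀ i, p i ≠ 0 → q i ≠ 0) (hsum : ∑ i, q i ≤ ∑ i, p i) :
    ∑ i, p i * Real.logb 2 (q i / p i) ≤ 0 := by
  have h1 : ∑ i, p i * Real.logb 2 (q i / p i) ≤ ∑ i, (q i - p i) / Real.log 2 := by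
    apply Finset.sum_le_sum
    intro i _
    rcases eq_or_lt_of_le (hp i) with h | h
    · rw [← h]
      simp only [zero_mul]
      have : 0 ≤ q i - 0 := by linarith [hq i]
      positivity
    · have hqi : 0 < q i := lt_of_le_of_ne (hq i) (Ne.symm (hsupp i (ne_of_gt h)))
      have hd : 0 < q i / p i := div_pos hqi h
      have hlog := Real.log_le_sub_one_of_pos hd
      rw [Real.logb]
      rw [mul_div_assoc' (p i) _ (Real.log 2), div_le_div_iff_of_pos_right two_logb_pos]
      calc p i * Real.log (q i / p i) ≤ p i * (q i / p i - 1) := by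
            exact mul_le_mul_of_nonneg_left hlog (le_of_lt h)
        _ = q i - p i := by field_simp
  refine h1.trans ?_
  rw [← Finset.sum_div, Finset.sum_sub_distrib]
  apply div_nonpos_of_nonpos_of_nonneg _ (le_of_lt two_logb_pos)
  linarith

/-- Continuity of `(p,q) ↦ p * logb 2 q` on `{0 ≤ p ≤ q}`. -/
lemma contOn_mul_logb :
    ContinuousOn (fun z : ℝ × ℝ => z.1 * Real.logb 2 z.2) {z : ℝ × ℝ | 0 ≤ z.1 ∧ z.1 ≤ z.2} := by
  intro z hz
  rcases eq_or_lt_of_le (hz.1.trans hz.2) with h0 | hpos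
  · have hz2 : z.2 = 0 := h0.symm
    have hz1 : z.1 = 0 := le_antisymm (hz.2.trans_eq hz2) hz.1
    have hval : z.1 * Real.logb 2 z.2 = 0 := by simp [hz1]
    rw [ContinuousWithinAt, hval]
    apply squeeze_zero_norm' (a := fun w : ℝ × ℝ => ‖w.2 * Real.logb 2 w.2‖)
    · filter_upwards [self_mem_nhdsWithin] with w hw
      rcases hw with ⟨hw1, hw2⟩
      rw [Real.norm_eq_abs, Real.norm_eq_abs, abs_mul, abs_mul]
      apply mul_le_mul_of_nonneg_right _ (abs_nonneg _)
      rw [abs_of_nonneg hw1, abs_of_nonneg (hw1.trans hw2)]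
      exact hw2
    · have hc : Continuous fun w : ℝ × ℝ => ‖w.2 * Real.logb 2 w.2‖ := by
        have : Continuous fun x : ℝ => x * Real.logb 2 x := by
          have := Real.continuous_mul_log.div_const (Real.log 2)
          convert this using 1
          ext x
          rw [Real.logb]
          ring
        exact (this.comp continuous_snd).norm
      have h2 := (hc.tendsto z).mono_left
        (nhdsWithin_le_nhds (s := {z : ℝ × ℝ | 0 ≤ z.1 ∧ z.1 ≤ z.2}))
      simpa [hz2] using h2
  · exact ((continuous_fst.continuousAt).mul
      ((Real.continuousAt_logb (ne_of_gt hpos)).comp continuous_snd.continuousAt)).continuousWithinAt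

variable {X Y A Xh : Type} [Fintype X] [Fintype Y] [Fintype A] [Fintype Xh]
  [DecidableEq X] [DecidableEq Y] [DecidableEq A] [DecidableEq Xh]

section Marg
variable (PX : X → ℝ) (PW : A → X → Y → ℝ) (PT : X → Strat Y Xh A → ℝ)

lemma pA_eq_sum_pXA (a : A) : pA PX PT a = ∑ x, pXA PX PT x a := rfl

lemma pYT_eq (y : Y) (t : Strat Y Xh A) : pYT PX PW PT y t = ∑ x, pXYT PX PW PT x y t := rfl

lemma pXYA_eq (x : X) (y : Y) (a : A) :
    pXYA PX PW PT x y a = pXA PX PT x a * PW a x y := by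
  unfold pXYA pXA pXYT
  rw [Finset.sum_mul]
  apply Finset.sum_congr rfl
  intro t _
  split_ifs with h
  · rw [h]
  · simp

lemma pYA_eq (y : Y) (a : A) :
    pYA PX PW PT y a = ∑ x, pXA PX PT x a * PW a x y := by
  unfold pYA
  exact Finset.sum_congr rfl fun x _ => pXYA_eq PX PW PT x y a

variable (hPX : ∀ x, 0 ≤ PX x) (hPW : ∀ a x, IsPMF (PW a x)) (hPT : ∀ x t, 0 ≤ PT x t)

section Nonneg
include hPX hPW hPT

lemma pXYT_nonneg (x : X) (y : Y) (t : Strat Y Xh A) : 0 ≤ pXYT PX PW PT x y t :=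
  mul_nonneg (mul_nonneg (hPX x) (hPT x t)) ((hPW t.2 x).1 y)

lemma pXA_nonneg (x : X) (a : A) : 0 ≤ pXA PX PT x a := by
  apply Finset.sum_nonneg
  intro t _
  split_ifs
  · exact mul_nonneg (hPX x) (hPT x t)
  · exact le_refl 0

lemma pA_nonneg (a : A) : 0 ≤ pA PX PT a :=
  Finset.sum_nonneg fun x _ => pXA_nonneg PX PW PT hPX hPW hPT x a

lemma pXYA_nonneg (x : X) (y : Y) (a : A) : 0 ≤ pXYA PX PW PT x y a := by
  rw [pXYA_eq]
  exact mul_nonneg (pXA_nonneg PX PW PT hPX hPW hPT x a) ((hPW a x).1 y)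

lemma pYA_nonneg (y : Y) (a : A) : 0 ≤ pYA PX PW PT y a :=
  Finset.sum_nonneg fun x _ => pXYA_nonneg PX PW PT hPX hPW hPT x y a

lemma pYT_nonneg (y : Y) (t : Strat Y Xh A) : 0 ≤ pYT PX PW PT y t :=
  Finset.sum_nonneg fun x _ => pXYT_nonneg PX PW PT hPX hPW hPT x y t

lemma pXA_le_pA (x : X) (a : A) : pXA PX PT x a ≤ pA PX PT a := by
  rw [pA_eq_sum_pXA]
  exact Finset.single_le_sum (fun x' _ => pXA_nonneg PX PW PT hPX hPW hPT x' a) (Finset.mem_univ x)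

lemma mul_le_pXA (x : X) (t : Strat Y Xh A) : PX x * PT x t ≤ pXA PX PT x t.2 := by
  unfold pXA
  have := Finset.single_le_sum (s := Finset.univ)
    (f := fun t' : Strat Y Xh A => if t'.2 = t.2 then PX x * PT x t' else 0)
    (fun t' _ => by split_ifs; exacts [mul_nonneg (hPX x) (hPT x t'), le_refl 0])
    (Finset.mem_univ t)
  simpa using this

lemma pXYT_le_pXYA (x : X) (y : Y) (t : Strat Y Xh A) :
    pXYT PX PW PT x y t ≤ pXYA PX PW PT x y t.2 := by
  unfold pXYA
  have := Finset.single_le_sum (s := Finset.univ)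
    (f := fun t' : Strat Y Xh A => if t'.2 = t.2 then pXYT PX PW PT x y t' else 0)
    (fun t' _ => by split_ifs; exacts [pXYT_nonneg PX PW PT hPX hPW hPT x y t', le_refl 0])
    (Finset.mem_univ t)
  simpa using this

lemma pXYA_le_pYA (x : X) (y : Y) (a : A) : pXYA PX PW PT x y a ≤ pYA PX PW PT y a :=
  Finset.single_le_sum (fun x' _ => pXYA_nonneg PX PW PT hPX hPW hPT x' y a) (Finset.mem_univ x)

lemma pXYT_le_pYT (x : X) (y : Y) (t : Strat Y Xh A) :
    pXYT PX PW PT x y t ≤ pYT PX PW PT y t :=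
  Finset.single_le_sum (fun x' _ => pXYT_nonneg PX PW PT hPX hPW hPT x' y t) (Finset.mem_univ x)

end Nonneg

lemma sum_y_pXYT (hPW : ∀ a x, IsPMF (PW a x)) (x : X) (t : Strat Y Xh A) :
    ∑ y, pXYT PX PW PT x y t = PX x * PT x t := by
  unfold pXYT
  rw [← Finset.mul_sum, (hPW t.2 x).2, mul_one]

end Marg
end RDAux
namespace RDAux
set_option linter.unusedSectionVars false
section Marg2
variable {X Y A Xh : Type} [Fintype X] [Fintype Y] [Fintype A] [Fintype Xh]
  [DecidableEq X] [DecidableEq Y] [DecidableEq A] [DecidableEq Xh]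
variable (PX : X → ℝ) (PW : A → X → Y → ℝ) (PT : X → Strat Y Xh A → ℝ)

lemma sum_fiber (g : Strat Y Xh A → ℝ) (h : A → ℝ) :
    ∑ a, (∑ t, if t.2 = a then g t else 0) * h a = ∑ t, g t * h t.2 := by
  simp_rw [Finset.sum_mul, ite_mul, zero_mul]
  rw [Finset.sum_comm]
  apply Finset.sum_congr rfl
  intro t _
  rw [Finset.sum_ite_eq Finset.univ t.2 (fun a => g t * h a)]
  simp

lemma sum_a_pXA (hPT : IsCondPMF PT) (x : X) : ∑ a, pXA PX PT x a = PX x := by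
  unfold pXA
  rw [Finset.sum_comm]
  have : ∀ t : Strat Y Xh A, (∑ a, if t.2 = a then PX x * PT x t else 0) = PX x * PT x t := by
    intro t
    rw [Finset.sum_ite_eq Finset.univ t.2 (fun _ => PX x * PT x t)]
    simp
  rw [Finset.sum_congr rfl (fun t _ => this t), ← Finset.mul_sum, (hPT x).2, mul_one]

lemma sum_pA (hPX : IsPMF PX) (hPT : IsCondPMF PT) : ∑ a, pA PX PT a = 1 := by
  unfold pA
  rw [Finset.sum_comm]
  calc ∑ x, ∑ a, ∑ t, (if t.2 = a then PX x * PT x t else 0)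
      = ∑ x, PX x := Finset.sum_congr rfl (fun x _ => by
        rw [show (∑ a, ∑ t, if t.2 = a then PX x * PT x t else 0) = ∑ a, pXA PX PT x a from rfl,
          sum_a_pXA PX PT hPT x])
    _ = 1 := hPX.2

lemma sum_y_pYA (hPW : ∀ a x, IsPMF (PW a x)) (a : A) :
    ∑ y, pYA PX PW PT y a = pA PX PT a := by
  simp_rw [pYA_eq]
  rw [Finset.sum_comm]
  rw [pA_eq_sum_pXA]
  apply Finset.sum_congr rfl
  intro x _
  rw [← Finset.mul_sum, (hPW a x).2, mul_one]

lemma sum_yt_pYT (hPX : IsPMF PX) (hPW : ∀ a x, IsPMF (PW a x)) (hPT : IsCondPMF PT) :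
    ∑ y, ∑ t, pYT PX PW PT y t = 1 := by
  simp_rw [pYT_eq]
  rw [Finset.sum_comm]
  calc ∑ t, ∑ y, ∑ x, pXYT PX PW PT x y t
      = ∑ t, ∑ x, ∑ y, pXYT PX PW PT x y t := Finset.sum_congr rfl (fun t _ => Finset.sum_comm)
    _ = ∑ t, ∑ x, PX x * PT x t := by
        exact Finset.sum_congr rfl (fun t _ => Finset.sum_congr rfl
          (fun x _ => sum_y_pXYT PX PW PT hPW x t))
    _ = ∑ x, ∑ t, PX x * PT x t := Finset.sum_comm
    _ = ∑ x, PX x := Finset.sum_congr rfl (fun x _ => by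
        rw [← Finset.mul_sum, (hPT x).2, mul_one])
    _ = 1 := hPX.2

/-- The combined log-ratio for the merged rate sum. -/
def Phi (x : X) (y : Y) (t : Strat Y Xh A) : ℝ :=
  pXYT PX PW PT x y t * pYA PX PW PT y t.2 /
    (PX x * pA PX PT t.2 * PW t.2 x y * pYT PX PW PT y t)

/-- positivity package on the support -/
lemma support_pos (hPXpos : ∀ x, 0 < PX x) (hPW : ∀ a x, IsPMF (PW a x))
    (hPT : IsCondPMF PT) {x : X} {y : Y} {t : Strat Y Xh A}
    (h : pXYT PX PW PT x y t ≠ 0) :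
    0 < PT x t ∧ 0 < PW t.2 x y ∧ 0 < pXA PX PT x t.2 ∧ 0 < pA PX PT t.2 ∧
    0 < pXYA PX PW PT x y t.2 ∧ 0 < pYA PX PW PT y t.2 ∧ 0 < pYT PX PW PT y t := by
  have hPX' : ∀ x, 0 ≤ PX x := fun x => (hPXpos x).le
  have hPT' : ∀ x t, 0 ≤ PT x t := fun x t => ((hPT x).1 t)
  have hp : 0 < pXYT PX PW PT x y t :=
    lt_of_le_of_ne (pXYT_nonneg PX PW PT hPX' hPW hPT' x y t) (Ne.symm h)
  have hPTpos : 0 < PT x t := by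
    rcases (hPT' x t).lt_or_eq with h' | h'
    · exact h'
    · exfalso; unfold pXYT at hp; rw [← h'] at hp; simp at hp
  have hWpos : 0 < PW t.2 x y := by
    rcases ((hPW t.2 x).1 y).lt_or_eq with h' | h'
    · exact h'
    · exfalso; unfold pXYT at hp; rw [← h'] at hp; simp at hp
  have hxa : 0 < pXA PX PT x t.2 :=
    lt_of_lt_of_le (mul_pos (hPXpos x) hPTpos) (mul_le_pXA PX PW PT hPX' hPW hPT' x t)
  refine ⟨hPTpos, hWpos, hxa, lt_of_lt_of_le hxa (pXA_le_pA PX PW PT hPX' hPW hPT' x t.2), ?_, ?_, ?_⟩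
  · exact lt_of_lt_of_le hp (pXYT_le_pXYA PX PW PT hPX' hPW hPT' x y t)
  · exact lt_of_lt_of_le (lt_of_lt_of_le hp (pXYT_le_pXYA PX PW PT hPX' hPW hPT' x y t))
      (pXYA_le_pYA PX PW PT hPX' hPW hPT' x y t.2)
  · exact lt_of_lt_of_le hp (pXYT_le_pYT PX PW PT hPX' hPW hPT' x y t)

lemma J_eq_sum (hPXpos : ∀ x, 0 < PX x) (hPW : ∀ a x, IsPMF (PW a x)) (hPT : IsCondPMF PT) :
    IXA PX PT + IXTcondYA PX PW PT =
      ∑ x, ∑ y, ∑ t, pXYT PX PW PT x y t * Real.logb 2 (Phi PX PW PT x y t) := by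
  have step1 : IXA PX PT = ∑ x, ∑ y, ∑ t, pXYT PX PW PT x y t *
      Real.logb 2 (pXA PX PT x t.2 / (PX x * pA PX PT t.2)) := by
    unfold IXA
    apply Finset.sum_congr rfl
    intro x _
    rw [show (∑ a, pXA PX PT x a * Real.logb 2 (pXA PX PT x a / (PX x * pA PX PT a)))
        = ∑ a, (∑ t, if t.2 = a then PX x * PT x t else 0) *
          (fun a => Real.logb 2 (pXA PX PT x a / (PX x * pA PX PT a))) a from rfl]
    rw [sum_fiber]
    rw [Finset.sum_comm]
    apply Finset.sum_congr rfl
    intro t _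
    rw [show (∑ y, pXYT PX PW PT x y t *
        Real.logb 2 (pXA PX PT x t.2 / (PX x * pA PX PT t.2)))
      = (∑ y, pXYT PX PW PT x y t) * Real.logb 2 (pXA PX PT x t.2 / (PX x * pA PX PT t.2))
      from (Finset.sum_mul _ _ _).symm]
    rw [sum_y_pXYT PX PW PT hPW x t]
  rw [step1]
  unfold IXTcondYA
  rw [← Finset.sum_add_distrib]
  apply Finset.sum_congr rfl; intro x _
  rw [← Finset.sum_add_distrib]
  apply Finset.sum_congr rfl; intro y _
  rw [← Finset.sum_add_distrib]
  apply Finset.sum_congr rfl; intro t _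
  by_cases h : pXYT PX PW PT x y t = 0
  · rw [h]; ring
  · obtain ⟨hPTt, hW, hxa, ha, hxya, hya, hyt⟩ := support_pos PX PW PT hPXpos hPW hPT h
    rw [← mul_add]
    congr 1
    rw [pXYA_eq]
    have hp : 0 < pXYT PX PW PT x y t := by
      have hPX' : ∀ x, 0 ≤ PX x := fun x => (hPXpos x).le
      have hPT' : ∀ x t, 0 ≤ PT x t := fun x t => ((hPT x).1 t)
      exact lt_of_le_of_ne (pXYT_nonneg PX PW PT hPX' hPW hPT' x y t) (Ne.symm h)
    have hPXx := hPXpos x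
    rw [← Real.logb_mul (by positivity) (by positivity)]
    congr 1
    unfold Phi
    field_simp
  end Marg2
end RDAux
namespace RDAux
set_option linter.unusedSectionVars false
section NN
variable {X Y A Xh : Type} [Fintype X] [Fintype Y] [Fintype A] [Fintype Xh]
  [DecidableEq X] [DecidableEq Y] [DecidableEq A] [DecidableEq Xh]
variable (PX : X → ℝ) (PW : A → X → Y → ℝ) (PT : X → Strat Y Xh A → ℝ)

lemma IXA_nonneg (hPX : IsPMF PX) (hPXpos : ∀ x, 0 < PX x)
    (hPW : ∀ a x, IsPMF (PW a x)) (hPT : IsCondPMF PT) : 0 ≤ IXA PX PT := by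
  have hPX' : ∀ x, 0 ≤ PX x := fun x => (hPXpos x).le
  have hPT' : ∀ x t, 0 ≤ PT x t := fun x t => ((hPT x).1 t)
  set p : X × A → ℝ := fun z => pXA PX PT z.1 z.2 with hpdef
  set q : X × A → ℝ := fun z => PX z.1 * pA PX PT z.2 with hqdef
  have hgibbs := gibbs p q
    (fun z => pXA_nonneg PX PW PT hPX' hPW hPT' z.1 z.2)
    (fun z => mul_nonneg (hPX' z.1) (pA_nonneg PX PW PT hPX' hPW hPT' z.2))
    (fun z hz => by
      have h1 : pXA PX PT z.1 z.2 ≤ pA PX PT z.2 := pXA_le_pA PX PW PT hPX' hPW hPT' z.1 z.2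
      have h2 : 0 < pXA PX PT z.1 z.2 :=
        lt_of_le_of_ne (pXA_nonneg PX PW PT hPX' hPW hPT' z.1 z.2) (Ne.symm hz)
      have h3 := (hPXpos z.1)
      have h4 : 0 < pA PX PT z.2 := lt_of_lt_of_le h2 h1
      simp only [hqdef]
      positivity)
    (by
      rw [Fintype.sum_prod_type, Fintype.sum_prod_type]
      simp only [hpdef, hqdef]
      have h1 : ∑ x, ∑ a, PX x * pA PX PT a = 1 := by
        calc ∑ x, ∑ a, PX x * pA PX PT a = ∑ x, PX x * ∑ a, pA PX PT a :=
              Finset.sum_congr rfl (fun x _ => (Finset.mul_sum _ _ _).symm)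
          _ = 1 := by rw [sum_pA PX PT hPX hPT]; simp [hPX.2]
      have h2 : ∑ x, ∑ a, pXA PX PT x a = 1 := by
        calc ∑ x, ∑ a, pXA PX PT x a = ∑ x, PX x :=
              Finset.sum_congr rfl (fun x _ => sum_a_pXA PX PT hPT x)
          _ = 1 := hPX.2
      rw [h1, h2])
  have heq : IXA PX PT = -∑ z : X × A, p z * Real.logb 2 (q z / p z) := by
    rw [← Finset.sum_neg_distrib, Fintype.sum_prod_type]
    unfold IXA
    apply Finset.sum_congr rfl; intro x _
    apply Finset.sum_congr rfl; intro a _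
    by_cases h : pXA PX PT x a = 0
    · simp [hpdef, h]
    · have h2 : 0 < pXA PX PT x a :=
        lt_of_le_of_ne (pXA_nonneg PX PW PT hPX' hPW hPT' x a) (Ne.symm h)
      have h3 : 0 < pA PX PT a := lt_of_lt_of_le h2 (pXA_le_pA PX PW PT hPX' hPW hPT' x a)
      have h4 := hPXpos x
      simp only [hpdef, hqdef, ← neg_mul]
      rw [show (PX x * pA PX PT a / pXA PX PT x a)
          = (pXA PX PT x a / (PX x * pA PX PT a))⁻¹ by field_simp, Real.logb_inv]
      ring
  rw [heq]
  linarith [hgibbs]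

lemma sum_xyt_pXYT (hPX : IsPMF PX) (hPW : ∀ a x, IsPMF (PW a x)) (hPT : IsCondPMF PT) :
    ∑ yz : Y × Strat Y Xh A, ∑ x, pXYT PX PW PT x yz.1 yz.2 = 1 := by
  calc ∑ yz : Y × Strat Y Xh A, ∑ x, pXYT PX PW PT x yz.1 yz.2
      = ∑ yz : Y × Strat Y Xh A, pYT PX PW PT yz.1 yz.2 := rfl
    _ = 1 := by rw [Fintype.sum_prod_type]; exact sum_yt_pYT PX PW PT hPX hPW hPT

lemma IXTcondYA_nonneg (hPX : IsPMF PX) (hPXpos : ∀ x, 0 < PX x)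
    (hPW : ∀ a x, IsPMF (PW a x)) (hPT : IsCondPMF PT) : 0 ≤ IXTcondYA PX PW PT := by
  have hPX' : ∀ x, 0 ≤ PX x := fun x => (hPXpos x).le
  have hPT' : ∀ x t, 0 ≤ PT x t := fun x t => ((hPT x).1 t)
  set p : X × Y × Strat Y Xh A → ℝ := fun z => pXYT PX PW PT z.1 z.2.1 z.2.2 with hpdef
  set q : X × Y × Strat Y Xh A → ℝ := fun z =>
    pXYA PX PW PT z.1 z.2.1 z.2.2.2 * pYT PX PW PT z.2.1 z.2.2 / pYA PX PW PT z.2.1 z.2.2.2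
    with hqdef
  have hgibbs := gibbs p q
    (fun z => pXYT_nonneg PX PW PT hPX' hPW hPT' _ _ _)
    (fun z => by
      simp only [hqdef]
      have h1 := pXYA_nonneg PX PW PT hPX' hPW hPT' z.1 z.2.1 z.2.2.2
      have h2 := pYT_nonneg PX PW PT hPX' hPW hPT' z.2.1 z.2.2
      have h3 := pYA_nonneg PX PW PT hPX' hPW hPT' z.2.1 z.2.2.2
      positivity)
    (fun z hz => by
      obtain ⟨_, _, _, _, hxya, hya, hyt⟩ := support_pos PX PW PT hPXpos hPW hPT hz
      simp only [hqdef]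
      positivity)
    (by
      have hp1 : ∑ z : X × Y × Strat Y Xh A, p z = 1 := by
        rw [Fintype.sum_prod_type, Finset.sum_comm]
        exact sum_xyt_pXYT PX PW PT hPX hPW hPT
      have hq1 : ∑ z : X × Y × Strat Y Xh A, q z ≤ 1 := by
        rw [Fintype.sum_prod_type, Finset.sum_comm]
        calc ∑ yz : Y × Strat Y Xh A, ∑ x, q (x, yz)
            ≤ ∑ yz : Y × Strat Y Xh A, pYT PX PW PT yz.1 yz.2 := by
              apply Finset.sum_le_sum
              intro yz _
              by_cases hya : pYA PX PW PT yz.1 yz.2.2 = 0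
              · have hz : ∀ x, q (x, yz) = 0 := fun x => by
                  simp only [hqdef, hya]; simp
                rw [Finset.sum_congr rfl (fun x _ => hz x)]
                simp [pYT_nonneg PX PW PT hPX' hPW hPT' yz.1 yz.2]
              · have : ∑ x, q (x, yz) = pYT PX PW PT yz.1 yz.2 := by
                  simp only [hqdef]
                  rw [← Finset.sum_div, ← Finset.sum_mul]
                  rw [show (∑ x, pXYA PX PW PT x yz.1 yz.2.2) = pYA PX PW PT yz.1 yz.2.2 from rfl]
                  field_simp
                rw [this]
          _ = 1 := by
              rw [show (∑ yz : Y × Strat Y Xh A, pYT PX PW PT yz.1 yz.2)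
                  = ∑ yz : Y × Strat Y Xh A, ∑ x, pXYT PX PW PT x yz.1 yz.2 from rfl]
              exact sum_xyt_pXYT PX PW PT hPX hPW hPT
      rw [hp1]; exact hq1)
  have heq : IXTcondYA PX PW PT = -∑ z : X × Y × Strat Y Xh A, p z * Real.logb 2 (q z / p z) := by
    rw [← Finset.sum_neg_distrib, Fintype.sum_prod_type]
    unfold IXTcondYA
    apply Finset.sum_congr rfl; intro x _
    rw [Fintype.sum_prod_type]
    apply Finset.sum_congr rfl; intro y _
    apply Finset.sum_congr rfl; intro t _
    by_cases h : pXYT PX PW PT x y t = 0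
    · simp [hpdef, h]
    · obtain ⟨_, _, _, _, hxya, hya, hyt⟩ := support_pos PX PW PT hPXpos hPW hPT h
      have hp0 : 0 < pXYT PX PW PT x y t :=
        lt_of_le_of_ne (pXYT_nonneg PX PW PT hPX' hPW hPT' x y t) (Ne.symm h)
      simp only [hpdef, hqdef, ← neg_mul]
      rw [show (pXYA PX PW PT x y t.2 * pYT PX PW PT y t / pYA PX PW PT y t.2 / pXYT PX PW PT x y t)
          = (pXYT PX PW PT x y t * pYA PX PW PT y t.2 /
              (pXYA PX PW PT x y t.2 * pYT PX PW PT y t))⁻¹ by field_simp, Real.logb_inv]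
      ring
  rw [heq]
  linarith [hgibbs]
end NN
end RDAux
namespace RDAux
set_option linter.unusedSectionVars false
section Mix
variable {X Y A Xh : Type} [Fintype X] [Fintype Y] [Fintype A] [Fintype Xh]
  [DecidableEq X] [DecidableEq Y] [DecidableEq A] [DecidableEq Xh]
variable (PX : X → ℝ) (PW : A → X → Y → ℝ)

/-- The deterministic (Dirac) strategy. -/
def dir (t0 : Strat Y Xh A) : X → Strat Y Xh A → ℝ := fun _ t => if t = t0 then 1 else 0

lemma dir_cond (t0 : Strat Y Xh A) : IsCondPMF (dir (X := X) t0) := by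
  intro x
  constructor
  · intro t; unfold dir; split_ifs <;> norm_num
  · simp [dir]

/-- average side-information density of the dirac action -/
def wbar (t0 : Strat Y Xh A) (y : Y) : ℝ := ∑ x, PX x * PW t0.2 x y

lemma pXYT_dir (t0 : Strat Y Xh A) (x : X) (y : Y) (t : Strat Y Xh A) :
    pXYT PX PW (dir t0) x y t = if t = t0 then PX x * PW t0.2 x y else 0 := by
  unfold pXYT dir
  split_ifs with h
  · rw [h]; ring
  · ring

lemma pXA_dir (t0 : Strat Y Xh A) (x : X) (a : A) :
    pXA PX (dir t0) x a = if t0.2 = a then PX x else 0 := by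
  unfold pXA dir
  rw [show (∑ t, if t.2 = a then PX x * (if t = t0 then (1:ℝ) else 0) else 0)
      = ∑ t, if t = t0 then (if t.2 = a then PX x else 0) else 0 by
    apply Finset.sum_congr rfl; intro t _
    by_cases ht : t = t0
    · subst ht; split_ifs <;> simp
    · simp [ht]]
  rw [Finset.sum_ite_eq' Finset.univ t0 (fun t => if t.2 = a then PX x else 0)]
  simp

lemma pA_dir (hPX : IsPMF PX) (t0 : Strat Y Xh A) (a : A) :
    pA PX (dir t0) a = if t0.2 = a then 1 else 0 := by
  rw [pA_eq_sum_pXA]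
  rw [Finset.sum_congr rfl (fun x _ => pXA_dir PX t0 x a)]
  split_ifs <;> simp [hPX.2]

lemma pYA_dir (t0 : Strat Y Xh A) (y : Y) (a : A) :
    pYA PX PW (dir t0) y a = if t0.2 = a then wbar PX PW t0 y else 0 := by
  rw [pYA_eq]
  rw [Finset.sum_congr rfl (fun x _ => by rw [pXA_dir PX t0 x a])]
  unfold wbar
  split_ifs with h
  · apply Finset.sum_congr rfl; intro x _; rw [← h]
  · simp

lemma pYT_dir (t0 : Strat Y Xh A) (y : Y) (t : Strat Y Xh A) :
    pYT PX PW (dir t0) y t = if t = t0 then wbar PX PW t0 y else 0 := by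
  rw [pYT_eq]
  rw [Finset.sum_congr rfl (fun x _ => pXYT_dir PX PW t0 x y t)]
  unfold wbar
  split_ifs <;> simp

variable (P1 P2 : X → Strat Y Xh A → ℝ) (c1 c2 : ℝ)

lemma pXYT_mix (x : X) (y : Y) (t : Strat Y Xh A) :
    pXYT PX PW (fun x t => c1 * P1 x t + c2 * P2 x t) x y t
      = c1 * pXYT PX PW P1 x y t + c2 * pXYT PX PW P2 x y t := by
  unfold pXYT; ring

lemma pXA_mix (x : X) (a : A) :
    pXA PX (fun x t => c1 * P1 x t + c2 * P2 x t) x a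
      = c1 * pXA PX P1 x a + c2 * pXA PX P2 x a := by
  unfold pXA
  rw [Finset.mul_sum, Finset.mul_sum, ← Finset.sum_add_distrib]
  apply Finset.sum_congr rfl; intro t _
  split_ifs <;> ring

lemma pA_mix (a : A) :
    pA PX (fun x t => c1 * P1 x t + c2 * P2 x t) a = c1 * pA PX P1 a + c2 * pA PX P2 a := by
  rw [pA_eq_sum_pXA, pA_eq_sum_pXA, pA_eq_sum_pXA, Finset.mul_sum, Finset.mul_sum,
    ← Finset.sum_add_distrib]
  exact Finset.sum_congr rfl fun x _ => pXA_mix PX P1 P2 c1 c2 x a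

lemma pYA_mix (y : Y) (a : A) :
    pYA PX PW (fun x t => c1 * P1 x t + c2 * P2 x t) y a
      = c1 * pYA PX PW P1 y a + c2 * pYA PX PW P2 y a := by
  rw [pYA_eq, pYA_eq, pYA_eq, Finset.mul_sum, Finset.mul_sum, ← Finset.sum_add_distrib]
  apply Finset.sum_congr rfl; intro x _
  rw [pXA_mix PX P1 P2 c1 c2 x a]; ring

lemma pYT_mix (y : Y) (t : Strat Y Xh A) :
    pYT PX PW (fun x t => c1 * P1 x t + c2 * P2 x t) y t
      = c1 * pYT PX PW P1 y t + c2 * pYT PX PW P2 y t := by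
  rw [pYT_eq, pYT_eq, pYT_eq, Finset.mul_sum, Finset.mul_sum, ← Finset.sum_add_distrib]
  exact Finset.sum_congr rfl fun x _ => pXYT_mix PX PW P1 P2 c1 c2 x y t

lemma expDist_mix (dist : X → Xh → ℝ) :
    expDist PX PW dist (fun x t => c1 * P1 x t + c2 * P2 x t)
      = c1 * expDist PX PW dist P1 + c2 * expDist PX PW dist P2 := by
  unfold expDist
  rw [Finset.mul_sum, Finset.mul_sum, ← Finset.sum_add_distrib]
  apply Finset.sum_congr rfl; intro x _
  rw [Finset.mul_sum, Finset.mul_sum, ← Finset.sum_add_distrib]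
  apply Finset.sum_congr rfl; intro y _
  rw [Finset.mul_sum, Finset.mul_sum, ← Finset.sum_add_distrib]
  apply Finset.sum_congr rfl; intro t _
  rw [pXYT_mix PX PW P1 P2 c1 c2]; ring

lemma expCost_mix (cost : A → ℝ) :
    expCost PX cost (fun x t => c1 * P1 x t + c2 * P2 x t)
      = c1 * expCost PX cost P1 + c2 * expCost PX cost P2 := by
  unfold expCost
  rw [Finset.mul_sum, Finset.mul_sum, ← Finset.sum_add_distrib]
  apply Finset.sum_congr rfl; intro x _
  rw [Finset.mul_sum, Finset.mul_sum, ← Finset.sum_add_distrib]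
  apply Finset.sum_congr rfl; intro t _
  ring

lemma mix_cond (hP1 : IsCondPMF P1) (hP2 : IsCondPMF P2) (h1 : 0 ≤ c1) (h2 : 0 ≤ c2)
    (hsum : c1 + c2 = 1) : IsCondPMF (fun x t => c1 * P1 x t + c2 * P2 x t) := by
  intro x
  constructor
  · intro t
    exact add_nonneg (mul_nonneg h1 ((hP1 x).1 t)) (mul_nonneg h2 ((hP2 x).1 t))
  · rw [Finset.sum_add_distrib, ← Finset.mul_sum, ← Finset.mul_sum, (hP1 x).2, (hP2 x).2]
    simpa using hsum

lemma pYA_le_pA (hPX : ∀ x, 0 ≤ PX x) (hPW : ∀ a x, IsPMF (PW a x))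
    (PT : X → Strat Y Xh A → ℝ) (hPT : ∀ x t, 0 ≤ PT x t) (y : Y) (a : A) :
    pYA PX PW PT y a ≤ pA PX PT a := by
  rw [← sum_y_pYA PX PW PT hPW a]
  exact Finset.single_le_sum (fun y' _ => pYA_nonneg PX PW PT hPX hPW hPT y' a)
    (Finset.mem_univ y)
end Mix
end RDAux
namespace RDAux
set_option linter.unusedSectionVars false
set_option maxHeartbeats 1000000
section Big
variable {X Y A Xh : Type} [Fintype X] [Fintype Y] [Fintype A] [Fintype Xh]
  [DecidableEq X] [DecidableEq Y] [DecidableEq A] [DecidableEq Xh]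
variable (PX : X → ℝ) (PW : A → X → Y → ℝ)

lemma regroup_ya (g : X → Y → Strat Y Xh A → ℝ) (h : Y → A → ℝ) :
    ∑ x, ∑ y, ∑ t, g x y t * h y t.2
      = ∑ y, ∑ a, (∑ x, ∑ t, if t.2 = a then g x y t else 0) * h y a := by
  rw [Finset.sum_comm]
  apply Finset.sum_congr rfl; intro y _
  calc ∑ x, ∑ t, g x y t * h y t.2
      = ∑ x, ∑ a, (∑ t, if t.2 = a then g x y t else 0) * h y a := by
        apply Finset.sum_congr rfl; intro x _
        exact (sum_fiber (fun t => g x y t) (fun a => h y a)).symm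
    _ = ∑ a, ∑ x, (∑ t, if t.2 = a then g x y t else 0) * h y a := Finset.sum_comm
    _ = ∑ a, (∑ x, ∑ t, if t.2 = a then g x y t else 0) * h y a := by
        apply Finset.sum_congr rfl; intro a _
        rw [Finset.sum_mul]

lemma sum_ite_scaled_pXYT (Pi : X → Strat Y Xh A → ℝ) (c : ℝ) (y : Y) (a : A) :
    (∑ x, ∑ t, if t.2 = a then c * pXYT PX PW Pi x y t else 0) = c * pYA PX PW Pi y a := by
  unfold pYA
  simp only [Finset.mul_sum, mul_ite, mul_zero]

variable (P : X → Strat Y Xh A → ℝ) (t0 : Strat Y Xh A) (ν : ℝ)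

lemma point0 (hPX : IsPMF PX) (hPXpos : ∀ x, 0 < PX x) (hPW : ∀ a x, IsPMF (PW a x))
    (hP : IsCondPMF P) (hν0 : 0 ≤ ν) (hν1 : ν ≤ 1) (x : X) (y : Y) (t : Strat Y Xh A)
    (h0 : (1-ν) * pXYT PX PW P x y t ≠ 0) :
    Real.logb 2 (Phi PX PW P x y t)
      = Real.logb 2 (Phi PX PW (fun x t => (1-ν) * P x t + ν * dir t0 x t) x y t)
      + Real.logb 2 (((1-ν) * pYA PX PW P y t.2
            * pA PX (fun x t => (1-ν) * P x t + ν * dir t0 x t) t.2)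
          / ((1-ν) * pA PX P t.2
            * pYA PX PW (fun x t => (1-ν) * P x t + ν * dir t0 x t) y t.2))
      + Real.logb 2 (((1-ν) * pXYT PX PW P x y t
            * pYT PX PW (fun x t => (1-ν) * P x t + ν * dir t0 x t) y t)
          / (pXYT PX PW (fun x t => (1-ν) * P x t + ν * dir t0 x t) x y t
            * ((1-ν) * pYT PX PW P y t))) := by
  have hPX' : ∀ x, 0 ≤ PX x := fun x => (hPXpos x).le
  have hP' : ∀ x t, 0 ≤ P x t := fun x t => ((hP x).1 t)
  set R := fun x t => (1-ν) * P x t + ν * dir t0 x t with hRdef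
  have hQ : IsCondPMF (dir (X := X) (Y := Y) (Xh := Xh) (A := A) t0) := dir_cond t0
  have hQ' : ∀ x t, 0 ≤ dir (X := X) (Y := Y) (Xh := Xh) (A := A) t0 x t :=
    fun x t => ((hQ x).1 t)
  have hR : IsCondPMF R := mix_cond P (dir t0) (1-ν) ν hP hQ (by linarith) hν0 (by ring)
  have hR' : ∀ x t, 0 ≤ R x t := fun x t => ((hR x).1 t)
  have hνlt : 0 < 1 - ν := by
    rcases eq_or_lt_of_le hν1 with h | h
    · exfalso; apply h0; rw [← h]; ring_nf
    · linarith
  have hpP : 0 < pXYT PX PW P x y t := by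
    have := mul_ne_zero_iff.mp h0
    exact lt_of_le_of_ne (pXYT_nonneg PX PW P hPX' hPW hP' x y t) (Ne.symm this.2)
  obtain ⟨hPTt, hW, hxaP, haP, hxyaP, hyaP, hytP⟩ :=
    support_pos PX PW P hPXpos hPW hP (ne_of_gt hpP)
  have hpR : 0 < pXYT PX PW R x y t := by
    rw [hRdef, pXYT_mix]
    have h2 : 0 ≤ ν * pXYT PX PW (dir t0) x y t :=
      mul_nonneg hν0 (pXYT_nonneg PX PW (dir t0) hPX' hPW hQ' x y t)
    nlinarith
  obtain ⟨hRTt, hWR, hxaR, haR, hxyaR, hyaR, hytR⟩ :=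
    support_pos PX PW R hPXpos hPW hR (ne_of_gt hpR)
  have hPXx := hPXpos x
  have hPhiP : 0 < Phi PX PW P x y t := by unfold Phi; positivity
  have hPhiR : 0 < Phi PX PW R x y t := by unfold Phi; positivity
  have hg1 : 0 < ((1-ν) * pYA PX PW P y t.2 * pA PX R t.2)
      / ((1-ν) * pA PX P t.2 * pYA PX PW R y t.2) := by positivity
  have hg2 : 0 < ((1-ν) * pXYT PX PW P x y t * pYT PX PW R y t)
      / (pXYT PX PW R x y t * ((1-ν) * pYT PX PW P y t)) := by positivity
  rw [← Real.logb_mul (ne_of_gt hPhiR) (ne_of_gt hg1),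
    ← Real.logb_mul (ne_of_gt (mul_pos hPhiR hg1)) (ne_of_gt hg2)]
  congr 1
  unfold Phi
  field_simp

lemma point1 (hPX : IsPMF PX) (hPXpos : ∀ x, 0 < PX x) (hPW : ∀ a x, IsPMF (PW a x))
    (hP : IsCondPMF P) (hν0 : 0 ≤ ν) (hν1 : ν ≤ 1) (x : X) (y : Y) (t : Strat Y Xh A)
    (h1 : ν * pXYT PX PW (dir t0) x y t ≠ 0) :
    Real.logb 2 (Phi PX PW (fun x t => (1-ν) * P x t + ν * dir t0 x t) x y t)
      + Real.logb 2 ((ν * pYA PX PW (dir t0) y t.2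
            * pA PX (fun x t => (1-ν) * P x t + ν * dir t0 x t) t.2)
          / ((ν * pA PX (dir t0) t.2)
            * pYA PX PW (fun x t => (1-ν) * P x t + ν * dir t0 x t) y t.2))
      + Real.logb 2 ((ν * pXYT PX PW (dir t0) x y t
            * pYT PX PW (fun x t => (1-ν) * P x t + ν * dir t0 x t) y t)
          / (pXYT PX PW (fun x t => (1-ν) * P x t + ν * dir t0 x t) x y t
            * (ν * pYT PX PW (dir t0) y t))) = 0 := by
  have hPX' : ∀ x, 0 ≤ PX x := fun x => (hPXpos x).le
  have hP' : ∀ x t, 0 ≤ P x t := fun x t => ((hP x).1 t)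
  set R := fun x t => (1-ν) * P x t + ν * dir t0 x t with hRdef
  have hQ : IsCondPMF (dir (X := X) (Y := Y) (Xh := Xh) (A := A) t0) := dir_cond t0
  have hQ' : ∀ x t, 0 ≤ dir (X := X) (Y := Y) (Xh := Xh) (A := A) t0 x t :=
    fun x t => ((hQ x).1 t)
  have hR : IsCondPMF R := mix_cond P (dir t0) (1-ν) ν hP hQ (by linarith) hν0 (by ring)
  have hR' : ∀ x t, 0 ≤ R x t := fun x t => ((hR x).1 t)
  have hν : 0 < ν := by
    rcases eq_or_lt_of_le hν0 with h | h
    · exfalso; apply h1; rw [← h]; ring_nf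
    · exact h
  have hpQne : pXYT PX PW (dir t0) x y t ≠ 0 := by
    intro hq; apply h1; rw [hq]; ring
  have ht : t = t0 := by
    by_contra hne
    apply hpQne
    rw [pXYT_dir, if_neg hne]
  subst ht
  have hW : 0 < PW t.2 x y := by
    rw [pXYT_dir, if_pos rfl] at hpQne
    rcases ((hPW t.2 x).1 y).lt_or_eq with h' | h'
    · exact h'
    · exfalso; apply hpQne; rw [← h']; ring
  have hwbar : 0 < wbar PX PW t y := by
    have hle : PX x * PW t.2 x y ≤ wbar PX PW t y :=
      Finset.single_le_sum (f := fun x' => PX x' * PW t.2 x' y)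
        (fun x' _ => mul_nonneg (hPX' x') ((hPW t.2 x').1 y)) (Finset.mem_univ x)
    exact lt_of_lt_of_le (mul_pos (hPXpos x) hW) hle
  have hpQ : 0 < pXYT PX PW (dir (X := X) t) x y t := by
    rw [pXYT_dir, if_pos rfl]
    exact mul_pos (hPXpos x) hW
  have hpR : 0 < pXYT PX PW R x y t := by
    rw [hRdef, pXYT_mix]
    have h2 : 0 ≤ (1-ν) * pXYT PX PW P x y t :=
      mul_nonneg (by linarith) (pXYT_nonneg PX PW P hPX' hPW hP' x y t)
    nlinarith
  obtain ⟨hRTt, hWR, hxaR, haR, hxyaR, hyaR, hytR⟩ :=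
    support_pos PX PW R hPXpos hPW hR (ne_of_gt hpR)
  have hPXx := hPXpos x
  rw [pYA_dir, pA_dir PX hPX, pYT_dir, pXYT_dir, if_pos rfl, if_pos rfl, if_pos rfl, if_pos rfl]
  have hPhiR : 0 < Phi PX PW R x y t := by unfold Phi; positivity
  have hg1 : 0 < (ν * wbar PX PW t y * pA PX R t.2) / ((ν * 1) * pYA PX PW R y t.2) := by
    positivity
  have hg2 : 0 < (ν * (PX x * PW t.2 x y) * pYT PX PW R y t)
      / (pXYT PX PW R x y t * (ν * wbar PX PW t y)) := by positivity
  rw [← Real.logb_mul (ne_of_gt hPhiR) (ne_of_gt hg1),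
    ← Real.logb_mul (ne_of_gt (mul_pos hPhiR hg1)) (ne_of_gt hg2)]
  rw [show Phi PX PW R x y t * ((ν * wbar PX PW t y * pA PX R t.2)
        / ((ν * 1) * pYA PX PW R y t.2))
      * ((ν * (PX x * PW t.2 x y) * pYT PX PW R y t)
        / (pXYT PX PW R x y t * (ν * wbar PX PW t y))) = 1 by
    unfold Phi
    field_simp]
  exact Real.logb_one
end Big
end RDAux
namespace RDAux
set_option linter.unusedSectionVars false
set_option maxHeartbeats 2000000

lemma mul_logb_div_le {p q : ℝ} (hp : 0 ≤ p) (hq : 0 ≤ q) (hsupp : p ≠ 0 → q ≠ 0) :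
    p * Real.logb 2 (q / p) ≤ (q - p) / Real.log 2 := by
  rcases eq_or_lt_of_le hp with h | h
  · rw [← h]
    simp only [zero_mul]
    have : 0 ≤ q - 0 := by linarith
    positivity
  · have hqi : 0 < q := lt_of_le_of_ne hq (Ne.symm (hsupp (ne_of_gt h)))
    have hd : 0 < q / p := div_pos hqi h
    have hlog := Real.log_le_sub_one_of_pos hd
    rw [Real.logb]
    rw [mul_div_assoc' p _ (Real.log 2), div_le_div_iff_of_pos_right two_logb_pos]
    calc p * Real.log (q / p) ≤ p * (q / p - 1) :=
          mul_le_mul_of_nonneg_left hlog (le_of_lt h)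
      _ = q - p := by field_simp

lemma gibbs_pair {ι : Type*} [Fintype ι] (p0 p1 q0 q1 : ι → ℝ)
    (hp0 : ∀ i, 0 ≤ p0 i) (hp1 : ∀ i, 0 ≤ p1 i) (hq0 : ∀ i, 0 ≤ q0 i) (hq1 : ∀ i, 0 ≤ q1 i)
    (hs0 : ∀ i, p0 i ≠ 0 → q0 i ≠ 0) (hs1 : ∀ i, p1 i ≠ 0 → q1 i ≠ 0)
    (hsum : ∑ i, (q0 i + q1 i) ≤ ∑ i, (p0 i + p1 i)) :
    ∑ i, (p0 i * Real.logb 2 (q0 i / p0 i) + p1 i * Real.logb 2 (q1 i / p1 i)) ≤ 0 := by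
  have h1 : ∑ i, (p0 i * Real.logb 2 (q0 i / p0 i) + p1 i * Real.logb 2 (q1 i / p1 i))
      ≤ ∑ i, ((q0 i + q1 i) - (p0 i + p1 i)) / Real.log 2 := by
    apply Finset.sum_le_sum
    intro i _
    have b0 := mul_logb_div_le (hp0 i) (hq0 i) (hs0 i)
    have b1 := mul_logb_div_le (hp1 i) (hq1 i) (hs1 i)
    have : ((q0 i + q1 i) - (p0 i + p1 i)) / Real.log 2
        = (q0 i - p0 i) / Real.log 2 + (q1 i - p1 i) / Real.log 2 := by ring
    rw [this]
    exact add_le_add b0 b1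
  refine h1.trans ?_
  rw [← Finset.sum_div, Finset.sum_sub_distrib]
  apply div_nonpos_of_nonpos_of_nonneg _ (le_of_lt two_logb_pos)
  linarith

section Big2
variable {X Y A Xh : Type} [Fintype X] [Fintype Y] [Fintype A] [Fintype Xh]
  [DecidableEq X] [DecidableEq Y] [DecidableEq A] [DecidableEq Xh]
variable (PX : X → ℝ) (PW : A → X → Y → ℝ) (P : X → Strat Y Xh A → ℝ)
  (t0 : Strat Y Xh A) (ν : ℝ)

lemma mix_rate_le (hPX : IsPMF PX) (hPXpos : ∀ x, 0 < PX x) (hPW : ∀ a x, IsPMF (PW a x))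
    (hP : IsCondPMF P) (hν0 : 0 ≤ ν) (hν1 : ν ≤ 1) :
    IXA PX (fun x t => (1-ν) * P x t + ν * dir t0 x t)
      + IXTcondYA PX PW (fun x t => (1-ν) * P x t + ν * dir t0 x t)
      ≤ (1-ν) * (IXA PX P + IXTcondYA PX PW P) := by
  have hPX' : ∀ x, 0 ≤ PX x := fun x => (hPXpos x).le
  have hP' : ∀ x t, 0 ≤ P x t := fun x t => ((hP x).1 t)
  have hQ : IsCondPMF (dir (X := X) (Y := Y) (Xh := Xh) (A := A) t0) := dir_cond t0
  have hQ' : ∀ x t, 0 ≤ dir (X := X) (Y := Y) (Xh := Xh) (A := A) t0 x t :=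
    fun x t => ((hQ x).1 t)
  have hR : IsCondPMF (fun x t => (1-ν) * P x t + ν * dir t0 x t) :=
    mix_cond P (dir t0) (1-ν) ν hP hQ (by linarith) hν0 (by ring)
  have hR' : ∀ x t, 0 ≤ (1-ν) * P x t + ν * dir t0 x t := fun x t => ((hR x).1 t)
  rw [J_eq_sum PX PW _ hPXpos hPW hR, J_eq_sum PX PW P hPXpos hPW hP]
  -- the two correction sums
  have key : (1-ν) * (∑ x, ∑ y, ∑ t, pXYT PX PW P x y t * Real.logb 2 (Phi PX PW P x y t))
      = (∑ x, ∑ y, ∑ t, pXYT PX PW (fun x t => (1-ν) * P x t + ν * dir t0 x t) x y t *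
          Real.logb 2 (Phi PX PW (fun x t => (1-ν) * P x t + ν * dir t0 x t) x y t))
        + (∑ x, ∑ y, ∑ t,
            ((1-ν) * pXYT PX PW P x y t * Real.logb 2
              (((1-ν) * pYA PX PW P y t.2
                  * pA PX (fun x t => (1-ν) * P x t + ν * dir t0 x t) t.2)
                / ((1-ν) * pA PX P t.2
                  * pYA PX PW (fun x t => (1-ν) * P x t + ν * dir t0 x t) y t.2))
            + ν * pXYT PX PW (dir t0) x y t * Real.logb 2
              ((ν * pYA PX PW (dir t0) y t.2
                  * pA PX (fun x t => (1-ν) * P x t + ν * dir t0 x t) t.2)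
                / ((ν * pA PX (dir t0) t.2)
                  * pYA PX PW (fun x t => (1-ν) * P x t + ν * dir t0 x t) y t.2))))
        + (∑ x, ∑ y, ∑ t,
            ((1-ν) * pXYT PX PW P x y t * Real.logb 2
              (((1-ν) * pXYT PX PW P x y t
                  * pYT PX PW (fun x t => (1-ν) * P x t + ν * dir t0 x t) y t)
                / (pXYT PX PW (fun x t => (1-ν) * P x t + ν * dir t0 x t) x y t
                  * ((1-ν) * pYT PX PW P y t)))
            + ν * pXYT PX PW (dir t0) x y t * Real.logb 2
              ((ν * pXYT PX PW (dir t0) x y t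
                  * pYT PX PW (fun x t => (1-ν) * P x t + ν * dir t0 x t) y t)
                / (pXYT PX PW (fun x t => (1-ν) * P x t + ν * dir t0 x t) x y t
                  * (ν * pYT PX PW (dir t0) y t))))) := by
    simp only [Finset.mul_sum, ← Finset.sum_add_distrib]
    apply Finset.sum_congr rfl; intro x _
    apply Finset.sum_congr rfl; intro y _
    apply Finset.sum_congr rfl; intro t _
    have e0 : ((1-ν) * pXYT PX PW P x y t) * Real.logb 2 (Phi PX PW P x y t)
        = ((1-ν) * pXYT PX PW P x y t) *
          (Real.logb 2 (Phi PX PW (fun x t => (1-ν) * P x t + ν * dir t0 x t) x y t)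
          + Real.logb 2 (((1-ν) * pYA PX PW P y t.2
                * pA PX (fun x t => (1-ν) * P x t + ν * dir t0 x t) t.2)
              / ((1-ν) * pA PX P t.2
                * pYA PX PW (fun x t => (1-ν) * P x t + ν * dir t0 x t) y t.2))
          + Real.logb 2 (((1-ν) * pXYT PX PW P x y t
                * pYT PX PW (fun x t => (1-ν) * P x t + ν * dir t0 x t) y t)
              / (pXYT PX PW (fun x t => (1-ν) * P x t + ν * dir t0 x t) x y t
                * ((1-ν) * pYT PX PW P y t)))) := by
      by_cases h : (1-ν) * pXYT PX PW P x y t = 0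
      · rw [h]; ring
      · rw [point0 PX PW P t0 ν hPX hPXpos hPW hP hν0 hν1 x y t h]
    have e1 : (ν * pXYT PX PW (dir t0) x y t) *
          (Real.logb 2 (Phi PX PW (fun x t => (1-ν) * P x t + ν * dir t0 x t) x y t)
          + Real.logb 2 ((ν * pYA PX PW (dir t0) y t.2
                * pA PX (fun x t => (1-ν) * P x t + ν * dir t0 x t) t.2)
              / ((ν * pA PX (dir t0) t.2)
                * pYA PX PW (fun x t => (1-ν) * P x t + ν * dir t0 x t) y t.2))
          + Real.logb 2 ((ν * pXYT PX PW (dir t0) x y t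
                * pYT PX PW (fun x t => (1-ν) * P x t + ν * dir t0 x t) y t)
              / (pXYT PX PW (fun x t => (1-ν) * P x t + ν * dir t0 x t) x y t
                * (ν * pYT PX PW (dir t0) y t)))) = 0 := by
      by_cases h : ν * pXYT PX PW (dir t0) x y t = 0
      · rw [h]; ring
      · rw [point1 PX PW P t0 ν hPX hPXpos hPW hP hν0 hν1 x y t h]; ring
    have hmix := pXYT_mix PX PW P (dir t0) (1-ν) ν x y t
    linear_combination e0 - e1 - Real.logb 2
      (Phi PX PW (fun x t => (1-ν) * P x t + ν * dir t0 x t) x y t) * hmix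
  -- nonnegativity of the first correction sum
  have hpos0 : ∀ y a, (1-ν) * pYA PX PW P y a ≠ 0 →
      0 < (1-ν) ∧ 0 < pYA PX PW P y a ∧ 0 < pA PX P a ∧
      0 < pYA PX PW (fun x t => (1-ν) * P x t + ν * dir t0 x t) y a ∧
      0 < pA PX (fun x t => (1-ν) * P x t + ν * dir t0 x t) a := by
    intro y a h
    obtain ⟨h1, h2⟩ := mul_ne_zero_iff.mp h
    have h1' : 0 < 1 - ν := lt_of_le_of_ne (by linarith) (Ne.symm h1)
    have h2' : 0 < pYA PX PW P y a :=
      lt_of_le_of_ne (pYA_nonneg PX PW P hPX' hPW hP' y a) (Ne.symm h2)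
    have h3 : 0 < pA PX P a := lt_of_lt_of_le h2' (pYA_le_pA PX PW hPX' hPW P hP' y a)
    refine ⟨h1', h2', h3, ?_, ?_⟩
    · rw [pYA_mix PX PW P (dir t0) (1-ν) ν y a]
      have := mul_nonneg hν0 (pYA_nonneg PX PW (dir t0) hPX' hPW hQ' y a)
      nlinarith
    · rw [pA_mix PX P (dir t0) (1-ν) ν a]
      have := mul_nonneg hν0 (pA_nonneg PX PW (dir t0) hPX' hPW hQ' a)
      nlinarith
  have hpos1 : ∀ y a, ν * pYA PX PW (dir t0) y a ≠ 0 →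
      0 < ν ∧ 0 < pYA PX PW (dir t0) y a ∧ 0 < pA PX (dir t0) a ∧
      0 < pYA PX PW (fun x t => (1-ν) * P x t + ν * dir t0 x t) y a ∧
      0 < pA PX (fun x t => (1-ν) * P x t + ν * dir t0 x t) a := by
    intro y a h
    obtain ⟨h1, h2⟩ := mul_ne_zero_iff.mp h
    have h1' : 0 < ν := lt_of_le_of_ne hν0 (Ne.symm h1)
    have h2' : 0 < pYA PX PW (dir t0) y a :=
      lt_of_le_of_ne (pYA_nonneg PX PW (dir t0) hPX' hPW hQ' y a) (Ne.symm h2)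
    have h3 : 0 < pA PX (dir t0) a :=
      lt_of_lt_of_le h2' (pYA_le_pA PX PW hPX' hPW (dir t0) hQ' y a)
    refine ⟨h1', h2', h3, ?_, ?_⟩
    · rw [pYA_mix PX PW P (dir t0) (1-ν) ν y a]
      have := mul_nonneg (show (0:ℝ) ≤ 1-ν by linarith) (pYA_nonneg PX PW P hPX' hPW hP' y a)
      nlinarith
    · rw [pA_mix PX P (dir t0) (1-ν) ν a]
      have := mul_nonneg (show (0:ℝ) ≤ 1-ν by linarith) (pA_nonneg PX PW P hPX' hPW hP' a)
      nlinarith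
  have hI1 : (0:ℝ) ≤ ∑ y, ∑ a,
      ((1-ν) * pYA PX PW P y a * Real.logb 2
        (((1-ν) * pYA PX PW P y a * pA PX (fun x t => (1-ν) * P x t + ν * dir t0 x t) a)
          / ((1-ν) * pA PX P a * pYA PX PW (fun x t => (1-ν) * P x t + ν * dir t0 x t) y a))
      + ν * pYA PX PW (dir t0) y a * Real.logb 2
        ((ν * pYA PX PW (dir t0) y a * pA PX (fun x t => (1-ν) * P x t + ν * dir t0 x t) a)
          / ((ν * pA PX (dir t0) a) * pYA PX PW (fun x t => (1-ν) * P x t + ν * dir t0 x t) y a))) := by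
    have hgp := gibbs_pair (ι := Y × A)
      (fun z => (1-ν) * pYA PX PW P z.1 z.2)
      (fun z => ν * pYA PX PW (dir t0) z.1 z.2)
      (fun z => (1-ν) * pA PX P z.2
        * pYA PX PW (fun x t => (1-ν) * P x t + ν * dir t0 x t) z.1 z.2
        / pA PX (fun x t => (1-ν) * P x t + ν * dir t0 x t) z.2)
      (fun z => ν * pA PX (dir t0) z.2
        * pYA PX PW (fun x t => (1-ν) * P x t + ν * dir t0 x t) z.1 z.2
        / pA PX (fun x t => (1-ν) * P x t + ν * dir t0 x t) z.2)
      (fun z => mul_nonneg (by linarith) (pYA_nonneg PX PW P hPX' hPW hP' z.1 z.2))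
      (fun z => mul_nonneg hν0 (pYA_nonneg PX PW (dir t0) hPX' hPW hQ' z.1 z.2))
      (fun z => div_nonneg (mul_nonneg (mul_nonneg (by linarith)
          (pA_nonneg PX PW P hPX' hPW hP' z.2))
          (pYA_nonneg PX PW _ hPX' hPW hR' z.1 z.2)) (pA_nonneg PX PW _ hPX' hPW hR' z.2))
      (fun z => div_nonneg (mul_nonneg (mul_nonneg hν0
          (pA_nonneg PX PW (dir t0) hPX' hPW hQ' z.2))
          (pYA_nonneg PX PW _ hPX' hPW hR' z.1 z.2)) (pA_nonneg PX PW _ hPX' hPW hR' z.2))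
      (fun z h => by
        obtain ⟨h1, h2, h3, h4, h5⟩ := hpos0 z.1 z.2 h
        positivity)
      (fun z h => by
        obtain ⟨h1, h2, h3, h4, h5⟩ := hpos1 z.1 z.2 h
        positivity)
      (by
        have hterm : ∀ z : Y × A,
            ((1-ν) * pA PX P z.2
              * pYA PX PW (fun x t => (1-ν) * P x t + ν * dir t0 x t) z.1 z.2
              / pA PX (fun x t => (1-ν) * P x t + ν * dir t0 x t) z.2)
            + (ν * pA PX (dir t0) z.2
              * pYA PX PW (fun x t => (1-ν) * P x t + ν * dir t0 x t) z.1 z.2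
              / pA PX (fun x t => (1-ν) * P x t + ν * dir t0 x t) z.2)
            ≤ pYA PX PW (fun x t => (1-ν) * P x t + ν * dir t0 x t) z.1 z.2 := by
          intro z
          by_cases h : pA PX (fun x t => (1-ν) * P x t + ν * dir t0 x t) z.2 = 0
          · rw [h, div_zero, div_zero]
            simp [pYA_nonneg PX PW _ hPX' hPW hR' z.1 z.2]
          · have : ((1-ν) * pA PX P z.2
                * pYA PX PW (fun x t => (1-ν) * P x t + ν * dir t0 x t) z.1 z.2
                / pA PX (fun x t => (1-ν) * P x t + ν * dir t0 x t) z.2)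
              + (ν * pA PX (dir t0) z.2
                * pYA PX PW (fun x t => (1-ν) * P x t + ν * dir t0 x t) z.1 z.2
                / pA PX (fun x t => (1-ν) * P x t + ν * dir t0 x t) z.2)
              = pYA PX PW (fun x t => (1-ν) * P x t + ν * dir t0 x t) z.1 z.2 := by
              have hm := pA_mix PX P (dir t0) (1-ν) ν z.2
              field_simp
              linear_combination pYA PX PW (fun x t => (1-ν) * P x t + ν * dir t0 x t) z.1 z.2 * hm.symm
            rw [this]
        calc ∑ z : Y × A, _ ≤ ∑ z : Y × A,
              pYA PX PW (fun x t => (1-ν) * P x t + ν * dir t0 x t) z.1 z.2 :=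
              Finset.sum_le_sum (fun z _ => hterm z)
          _ = ∑ z : Y × A, ((1-ν) * pYA PX PW P z.1 z.2 + ν * pYA PX PW (dir t0) z.1 z.2) := by
              apply Finset.sum_congr rfl
              intro z _
              exact pYA_mix PX PW P (dir t0) (1-ν) ν z.1 z.2
          _ = ∑ z : Y × A, _ := rfl)
    rw [Fintype.sum_prod_type] at hgp
    have hflip : ∀ (y : Y) (a : A),
        ((1-ν) * pYA PX PW P y a * Real.logb 2
          (((1-ν) * pYA PX PW P y a * pA PX (fun x t => (1-ν) * P x t + ν * dir t0 x t) a)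
            / ((1-ν) * pA PX P a * pYA PX PW (fun x t => (1-ν) * P x t + ν * dir t0 x t) y a))
        + ν * pYA PX PW (dir t0) y a * Real.logb 2
          ((ν * pYA PX PW (dir t0) y a * pA PX (fun x t => (1-ν) * P x t + ν * dir t0 x t) a)
            / ((ν * pA PX (dir t0) a) * pYA PX PW (fun x t => (1-ν) * P x t + ν * dir t0 x t) y a)))
        = -((1-ν) * pYA PX PW P y a * Real.logb 2
          (((1-ν) * pA PX P a * pYA PX PW (fun x t => (1-ν) * P x t + ν * dir t0 x t) y a
            / pA PX (fun x t => (1-ν) * P x t + ν * dir t0 x t) a)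
            / ((1-ν) * pYA PX PW P y a))
        + ν * pYA PX PW (dir t0) y a * Real.logb 2
          ((ν * pA PX (dir t0) a * pYA PX PW (fun x t => (1-ν) * P x t + ν * dir t0 x t) y a
            / pA PX (fun x t => (1-ν) * P x t + ν * dir t0 x t) a)
            / (ν * pYA PX PW (dir t0) y a))) := by
      intro y a
      have e0 : (1-ν) * pYA PX PW P y a * Real.logb 2
          (((1-ν) * pYA PX PW P y a * pA PX (fun x t => (1-ν) * P x t + ν * dir t0 x t) a)
            / ((1-ν) * pA PX P a * pYA PX PW (fun x t => (1-ν) * P x t + ν * dir t0 x t) y a))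
          = -((1-ν) * pYA PX PW P y a * Real.logb 2
          (((1-ν) * pA PX P a * pYA PX PW (fun x t => (1-ν) * P x t + ν * dir t0 x t) y a
            / pA PX (fun x t => (1-ν) * P x t + ν * dir t0 x t) a)
            / ((1-ν) * pYA PX PW P y a))) := by
        by_cases h : (1-ν) * pYA PX PW P y a = 0
        · rw [h]; ring
        · obtain ⟨h1, h2, h3, h4, h5⟩ := hpos0 y a h
          rw [show ((1-ν) * pA PX P a
                * pYA PX PW (fun x t => (1-ν) * P x t + ν * dir t0 x t) y a
                / pA PX (fun x t => (1-ν) * P x t + ν * dir t0 x t) a)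
                / ((1-ν) * pYA PX PW P y a)
              = (((1-ν) * pYA PX PW P y a
                  * pA PX (fun x t => (1-ν) * P x t + ν * dir t0 x t) a)
                / ((1-ν) * pA PX P a
                  * pYA PX PW (fun x t => (1-ν) * P x t + ν * dir t0 x t) y a))⁻¹ by
            field_simp]
          rw [Real.logb_inv]
          ring
      have e1 : ν * pYA PX PW (dir t0) y a * Real.logb 2
          ((ν * pYA PX PW (dir t0) y a * pA PX (fun x t => (1-ν) * P x t + ν * dir t0 x t) a)
            / ((ν * pA PX (dir t0) a)
              * pYA PX PW (fun x t => (1-ν) * P x t + ν * dir t0 x t) y a))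
          = -(ν * pYA PX PW (dir t0) y a * Real.logb 2
          ((ν * pA PX (dir t0) a * pYA PX PW (fun x t => (1-ν) * P x t + ν * dir t0 x t) y a
            / pA PX (fun x t => (1-ν) * P x t + ν * dir t0 x t) a)
            / (ν * pYA PX PW (dir t0) y a))) := by
        by_cases h : ν * pYA PX PW (dir t0) y a = 0
        · rw [h]; ring
        · obtain ⟨h1, h2, h3, h4, h5⟩ := hpos1 y a h
          rw [show (ν * pA PX (dir t0) a
                * pYA PX PW (fun x t => (1-ν) * P x t + ν * dir t0 x t) y a
                / pA PX (fun x t => (1-ν) * P x t + ν * dir t0 x t) a)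
                / (ν * pYA PX PW (dir t0) y a)
              = ((ν * pYA PX PW (dir t0) y a
                  * pA PX (fun x t => (1-ν) * P x t + ν * dir t0 x t) a)
                / ((ν * pA PX (dir t0) a)
                  * pYA PX PW (fun x t => (1-ν) * P x t + ν * dir t0 x t) y a))⁻¹ by
            field_simp]
          rw [Real.logb_inv]
          ring
      rw [e0, e1]; ring
    have : (∑ y, ∑ a,
        ((1-ν) * pYA PX PW P y a * Real.logb 2
          (((1-ν) * pYA PX PW P y a * pA PX (fun x t => (1-ν) * P x t + ν * dir t0 x t) a)
            / ((1-ν) * pA PX P a * pYA PX PW (fun x t => (1-ν) * P x t + ν * dir t0 x t) y a))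
        + ν * pYA PX PW (dir t0) y a * Real.logb 2
          ((ν * pYA PX PW (dir t0) y a * pA PX (fun x t => (1-ν) * P x t + ν * dir t0 x t) a)
            / ((ν * pA PX (dir t0) a)
              * pYA PX PW (fun x t => (1-ν) * P x t + ν * dir t0 x t) y a))))
        = -(∑ y, ∑ a,
        ((1-ν) * pYA PX PW P y a * Real.logb 2
          (((1-ν) * pA PX P a * pYA PX PW (fun x t => (1-ν) * P x t + ν * dir t0 x t) y a
            / pA PX (fun x t => (1-ν) * P x t + ν * dir t0 x t) a)
            / ((1-ν) * pYA PX PW P y a))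
        + ν * pYA PX PW (dir t0) y a * Real.logb 2
          ((ν * pA PX (dir t0) a * pYA PX PW (fun x t => (1-ν) * P x t + ν * dir t0 x t) y a
            / pA PX (fun x t => (1-ν) * P x t + ν * dir t0 x t) a)
            / (ν * pYA PX PW (dir t0) y a)))) := by
      rw [← Finset.sum_neg_distrib]
      apply Finset.sum_congr rfl; intro y _
      rw [← Finset.sum_neg_distrib]
      apply Finset.sum_congr rfl; intro a _
      exact hflip y a
    rw [this]
    linarith [hgp]
  -- nonnegativity of the second correction sum
  have hpos2 : ∀ x y (t : Strat Y Xh A), (1-ν) * pXYT PX PW P x y t ≠ 0 →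
      0 < (1-ν) ∧ 0 < pXYT PX PW P x y t ∧ 0 < pYT PX PW P y t ∧
      0 < pXYT PX PW (fun x t => (1-ν) * P x t + ν * dir t0 x t) x y t ∧
      0 < pYT PX PW (fun x t => (1-ν) * P x t + ν * dir t0 x t) y t := by
    intro x y t h
    obtain ⟨h1, h2⟩ := mul_ne_zero_iff.mp h
    have h1' : 0 < 1 - ν := lt_of_le_of_ne (by linarith) (Ne.symm h1)
    have h2' : 0 < pXYT PX PW P x y t :=
      lt_of_le_of_ne (pXYT_nonneg PX PW P hPX' hPW hP' x y t) (Ne.symm h2)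
    have h3 : 0 < pYT PX PW P y t :=
      lt_of_lt_of_le h2' (pXYT_le_pYT PX PW P hPX' hPW hP' x y t)
    refine ⟨h1', h2', h3, ?_, ?_⟩
    · rw [pXYT_mix PX PW P (dir t0) (1-ν) ν x y t]
      have := mul_nonneg hν0 (pXYT_nonneg PX PW (dir t0) hPX' hPW hQ' x y t)
      nlinarith
    · rw [pYT_mix PX PW P (dir t0) (1-ν) ν y t]
      have := mul_nonneg hν0 (pYT_nonneg PX PW (dir t0) hPX' hPW hQ' y t)
      nlinarith
  have hpos3 : ∀ x y (t : Strat Y Xh A), ν * pXYT PX PW (dir t0) x y t ≠ 0 →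
      0 < ν ∧ 0 < pXYT PX PW (dir t0) x y t ∧ 0 < pYT PX PW (dir t0) y t ∧
      0 < pXYT PX PW (fun x t => (1-ν) * P x t + ν * dir t0 x t) x y t ∧
      0 < pYT PX PW (fun x t => (1-ν) * P x t + ν * dir t0 x t) y t := by
    intro x y t h
    obtain ⟨h1, h2⟩ := mul_ne_zero_iff.mp h
    have h1' : 0 < ν := lt_of_le_of_ne hν0 (Ne.symm h1)
    have h2' : 0 < pXYT PX PW (dir t0) x y t :=
      lt_of_le_of_ne (pXYT_nonneg PX PW (dir t0) hPX' hPW hQ' x y t) (Ne.symm h2)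
    have h3 : 0 < pYT PX PW (dir t0) y t :=
      lt_of_lt_of_le h2' (pXYT_le_pYT PX PW (dir t0) hPX' hPW hQ' x y t)
    refine ⟨h1', h2', h3, ?_, ?_⟩
    · rw [pXYT_mix PX PW P (dir t0) (1-ν) ν x y t]
      have := mul_nonneg (show (0:ℝ) ≤ 1-ν by linarith) (pXYT_nonneg PX PW P hPX' hPW hP' x y t)
      nlinarith
    · rw [pYT_mix PX PW P (dir t0) (1-ν) ν y t]
      have := mul_nonneg (show (0:ℝ) ≤ 1-ν by linarith) (pYT_nonneg PX PW P hPX' hPW hP' y t)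
      nlinarith
  have hI2 : (0:ℝ) ≤ ∑ x, ∑ y, ∑ t,
      ((1-ν) * pXYT PX PW P x y t * Real.logb 2
        (((1-ν) * pXYT PX PW P x y t
            * pYT PX PW (fun x t => (1-ν) * P x t + ν * dir t0 x t) y t)
          / (pXYT PX PW (fun x t => (1-ν) * P x t + ν * dir t0 x t) x y t
            * ((1-ν) * pYT PX PW P y t)))
      + ν * pXYT PX PW (dir t0) x y t * Real.logb 2
        ((ν * pXYT PX PW (dir t0) x y t
            * pYT PX PW (fun x t => (1-ν) * P x t + ν * dir t0 x t) y t)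
          / (pXYT PX PW (fun x t => (1-ν) * P x t + ν * dir t0 x t) x y t
            * (ν * pYT PX PW (dir t0) y t)))) := by
    have hgp := gibbs_pair (ι := X × Y × Strat Y Xh A)
      (fun z => (1-ν) * pXYT PX PW P z.1 z.2.1 z.2.2)
      (fun z => ν * pXYT PX PW (dir t0) z.1 z.2.1 z.2.2)
      (fun z => pXYT PX PW (fun x t => (1-ν) * P x t + ν * dir t0 x t) z.1 z.2.1 z.2.2
        * ((1-ν) * pYT PX PW P z.2.1 z.2.2)
        / pYT PX PW (fun x t => (1-ν) * P x t + ν * dir t0 x t) z.2.1 z.2.2)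
      (fun z => pXYT PX PW (fun x t => (1-ν) * P x t + ν * dir t0 x t) z.1 z.2.1 z.2.2
        * (ν * pYT PX PW (dir t0) z.2.1 z.2.2)
        / pYT PX PW (fun x t => (1-ν) * P x t + ν * dir t0 x t) z.2.1 z.2.2)
      (fun z => mul_nonneg (by linarith) (pXYT_nonneg PX PW P hPX' hPW hP' _ _ _))
      (fun z => mul_nonneg hν0 (pXYT_nonneg PX PW (dir t0) hPX' hPW hQ' _ _ _))
      (fun z => div_nonneg (mul_nonneg (pXYT_nonneg PX PW _ hPX' hPW hR' _ _ _)
        (mul_nonneg (by linarith) (pYT_nonneg PX PW P hPX' hPW hP' _ _)))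
        (pYT_nonneg PX PW _ hPX' hPW hR' _ _))
      (fun z => div_nonneg (mul_nonneg (pXYT_nonneg PX PW _ hPX' hPW hR' _ _ _)
        (mul_nonneg hν0 (pYT_nonneg PX PW (dir t0) hPX' hPW hQ' _ _)))
        (pYT_nonneg PX PW _ hPX' hPW hR' _ _))
      (fun z h => by
        obtain ⟨h1, h2, h3, h4, h5⟩ := hpos2 z.1 z.2.1 z.2.2 h
        positivity)
      (fun z h => by
        obtain ⟨h1, h2, h3, h4, h5⟩ := hpos3 z.1 z.2.1 z.2.2 h
        positivity)
      (by
        apply Finset.sum_le_sum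
        intro z _
        by_cases h : pYT PX PW (fun x t => (1-ν) * P x t + ν * dir t0 x t) z.2.1 z.2.2 = 0
        · rw [h, div_zero, div_zero]
          have ha := mul_nonneg (show (0:ℝ) ≤ 1-ν by linarith)
            (pXYT_nonneg PX PW P hPX' hPW hP' z.1 z.2.1 z.2.2)
          have hb := mul_nonneg hν0 (pXYT_nonneg PX PW (dir t0) hPX' hPW hQ' z.1 z.2.1 z.2.2)
          linarith
        · have hm := pYT_mix PX PW P (dir t0) (1-ν) ν z.2.1 z.2.2
          have : pXYT PX PW (fun x t => (1-ν) * P x t + ν * dir t0 x t) z.1 z.2.1 z.2.2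
              * ((1-ν) * pYT PX PW P z.2.1 z.2.2)
              / pYT PX PW (fun x t => (1-ν) * P x t + ν * dir t0 x t) z.2.1 z.2.2
            + pXYT PX PW (fun x t => (1-ν) * P x t + ν * dir t0 x t) z.1 z.2.1 z.2.2
              * (ν * pYT PX PW (dir t0) z.2.1 z.2.2)
              / pYT PX PW (fun x t => (1-ν) * P x t + ν * dir t0 x t) z.2.1 z.2.2
            = pXYT PX PW (fun x t => (1-ν) * P x t + ν * dir t0 x t) z.1 z.2.1 z.2.2 := by
            field_simp
            linear_combination pXYT PX PW (fun x t => (1-ν) * P x t + ν * dir t0 x t)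
              z.1 z.2.1 z.2.2 * hm.symm
          rw [this, pXYT_mix PX PW P (dir t0) (1-ν) ν])
    have hflip : ∀ (z : X × Y × Strat Y Xh A),
        ((1-ν) * pXYT PX PW P z.1 z.2.1 z.2.2 * Real.logb 2
          (((1-ν) * pXYT PX PW P z.1 z.2.1 z.2.2
              * pYT PX PW (fun x t => (1-ν) * P x t + ν * dir t0 x t) z.2.1 z.2.2)
            / (pXYT PX PW (fun x t => (1-ν) * P x t + ν * dir t0 x t) z.1 z.2.1 z.2.2
              * ((1-ν) * pYT PX PW P z.2.1 z.2.2)))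
        + ν * pXYT PX PW (dir t0) z.1 z.2.1 z.2.2 * Real.logb 2
          ((ν * pXYT PX PW (dir t0) z.1 z.2.1 z.2.2
              * pYT PX PW (fun x t => (1-ν) * P x t + ν * dir t0 x t) z.2.1 z.2.2)
            / (pXYT PX PW (fun x t => (1-ν) * P x t + ν * dir t0 x t) z.1 z.2.1 z.2.2
              * (ν * pYT PX PW (dir t0) z.2.1 z.2.2))))
        = -((1-ν) * pXYT PX PW P z.1 z.2.1 z.2.2 * Real.logb 2
          ((pXYT PX PW (fun x t => (1-ν) * P x t + ν * dir t0 x t) z.1 z.2.1 z.2.2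
            * ((1-ν) * pYT PX PW P z.2.1 z.2.2)
            / pYT PX PW (fun x t => (1-ν) * P x t + ν * dir t0 x t) z.2.1 z.2.2)
            / ((1-ν) * pXYT PX PW P z.1 z.2.1 z.2.2))
        + ν * pXYT PX PW (dir t0) z.1 z.2.1 z.2.2 * Real.logb 2
          ((pXYT PX PW (fun x t => (1-ν) * P x t + ν * dir t0 x t) z.1 z.2.1 z.2.2
            * (ν * pYT PX PW (dir t0) z.2.1 z.2.2)
            / pYT PX PW (fun x t => (1-ν) * P x t + ν * dir t0 x t) z.2.1 z.2.2)
            / (ν * pXYT PX PW (dir t0) z.1 z.2.1 z.2.2))) := by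
      intro z
      have e0 : (1-ν) * pXYT PX PW P z.1 z.2.1 z.2.2 * Real.logb 2
          (((1-ν) * pXYT PX PW P z.1 z.2.1 z.2.2
              * pYT PX PW (fun x t => (1-ν) * P x t + ν * dir t0 x t) z.2.1 z.2.2)
            / (pXYT PX PW (fun x t => (1-ν) * P x t + ν * dir t0 x t) z.1 z.2.1 z.2.2
              * ((1-ν) * pYT PX PW P z.2.1 z.2.2)))
          = -((1-ν) * pXYT PX PW P z.1 z.2.1 z.2.2 * Real.logb 2
          ((pXYT PX PW (fun x t => (1-ν) * P x t + ν * dir t0 x t) z.1 z.2.1 z.2.2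
            * ((1-ν) * pYT PX PW P z.2.1 z.2.2)
            / pYT PX PW (fun x t => (1-ν) * P x t + ν * dir t0 x t) z.2.1 z.2.2)
            / ((1-ν) * pXYT PX PW P z.1 z.2.1 z.2.2))) := by
        by_cases h : (1-ν) * pXYT PX PW P z.1 z.2.1 z.2.2 = 0
        · rw [h]; ring
        · obtain ⟨h1, h2, h3, h4, h5⟩ := hpos2 z.1 z.2.1 z.2.2 h
          rw [show (pXYT PX PW (fun x t => (1-ν) * P x t + ν * dir t0 x t) z.1 z.2.1 z.2.2
                * ((1-ν) * pYT PX PW P z.2.1 z.2.2)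
                / pYT PX PW (fun x t => (1-ν) * P x t + ν * dir t0 x t) z.2.1 z.2.2)
                / ((1-ν) * pXYT PX PW P z.1 z.2.1 z.2.2)
              = (((1-ν) * pXYT PX PW P z.1 z.2.1 z.2.2
                  * pYT PX PW (fun x t => (1-ν) * P x t + ν * dir t0 x t) z.2.1 z.2.2)
                / (pXYT PX PW (fun x t => (1-ν) * P x t + ν * dir t0 x t) z.1 z.2.1 z.2.2
                  * ((1-ν) * pYT PX PW P z.2.1 z.2.2)))⁻¹ by
            field_simp]
          rw [Real.logb_inv]; ring
      have e1 : ν * pXYT PX PW (dir t0) z.1 z.2.1 z.2.2 * Real.logb 2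
          ((ν * pXYT PX PW (dir t0) z.1 z.2.1 z.2.2
              * pYT PX PW (fun x t => (1-ν) * P x t + ν * dir t0 x t) z.2.1 z.2.2)
            / (pXYT PX PW (fun x t => (1-ν) * P x t + ν * dir t0 x t) z.1 z.2.1 z.2.2
              * (ν * pYT PX PW (dir t0) z.2.1 z.2.2)))
          = -(ν * pXYT PX PW (dir t0) z.1 z.2.1 z.2.2 * Real.logb 2
          ((pXYT PX PW (fun x t => (1-ν) * P x t + ν * dir t0 x t) z.1 z.2.1 z.2.2
            * (ν * pYT PX PW (dir t0) z.2.1 z.2.2)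
            / pYT PX PW (fun x t => (1-ν) * P x t + ν * dir t0 x t) z.2.1 z.2.2)
            / (ν * pXYT PX PW (dir t0) z.1 z.2.1 z.2.2))) := by
        by_cases h : ν * pXYT PX PW (dir t0) z.1 z.2.1 z.2.2 = 0
        · rw [h]; ring
        · obtain ⟨h1, h2, h3, h4, h5⟩ := hpos3 z.1 z.2.1 z.2.2 h
          rw [show (pXYT PX PW (fun x t => (1-ν) * P x t + ν * dir t0 x t) z.1 z.2.1 z.2.2
                * (ν * pYT PX PW (dir t0) z.2.1 z.2.2)
                / pYT PX PW (fun x t => (1-ν) * P x t + ν * dir t0 x t) z.2.1 z.2.2)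
                / (ν * pXYT PX PW (dir t0) z.1 z.2.1 z.2.2)
              = ((ν * pXYT PX PW (dir t0) z.1 z.2.1 z.2.2
                  * pYT PX PW (fun x t => (1-ν) * P x t + ν * dir t0 x t) z.2.1 z.2.2)
                / (pXYT PX PW (fun x t => (1-ν) * P x t + ν * dir t0 x t) z.1 z.2.1 z.2.2
                  * (ν * pYT PX PW (dir t0) z.2.1 z.2.2)))⁻¹ by
            field_simp]
          rw [Real.logb_inv]; ring
      rw [e0, e1]; ring
    have hconv : (∑ x, ∑ y, ∑ t,
        ((1-ν) * pXYT PX PW P x y t * Real.logb 2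
          (((1-ν) * pXYT PX PW P x y t
              * pYT PX PW (fun x t => (1-ν) * P x t + ν * dir t0 x t) y t)
            / (pXYT PX PW (fun x t => (1-ν) * P x t + ν * dir t0 x t) x y t
              * ((1-ν) * pYT PX PW P y t)))
        + ν * pXYT PX PW (dir t0) x y t * Real.logb 2
          ((ν * pXYT PX PW (dir t0) x y t
              * pYT PX PW (fun x t => (1-ν) * P x t + ν * dir t0 x t) y t)
            / (pXYT PX PW (fun x t => (1-ν) * P x t + ν * dir t0 x t) x y t
              * (ν * pYT PX PW (dir t0) y t)))))
        = ∑ z : X × Y × Strat Y Xh A,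
        ((1-ν) * pXYT PX PW P z.1 z.2.1 z.2.2 * Real.logb 2
          (((1-ν) * pXYT PX PW P z.1 z.2.1 z.2.2
              * pYT PX PW (fun x t => (1-ν) * P x t + ν * dir t0 x t) z.2.1 z.2.2)
            / (pXYT PX PW (fun x t => (1-ν) * P x t + ν * dir t0 x t) z.1 z.2.1 z.2.2
              * ((1-ν) * pYT PX PW P z.2.1 z.2.2)))
        + ν * pXYT PX PW (dir t0) z.1 z.2.1 z.2.2 * Real.logb 2
          ((ν * pXYT PX PW (dir t0) z.1 z.2.1 z.2.2
              * pYT PX PW (fun x t => (1-ν) * P x t + ν * dir t0 x t) z.2.1 z.2.2)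
            / (pXYT PX PW (fun x t => (1-ν) * P x t + ν * dir t0 x t) z.1 z.2.1 z.2.2
              * (ν * pYT PX PW (dir t0) z.2.1 z.2.2)))) := by
      rw [Fintype.sum_prod_type]
      apply Finset.sum_congr rfl; intro x _
      rw [Fintype.sum_prod_type]
    rw [hconv]
    have hneg : ∀ z : X × Y × Strat Y Xh A, True := fun _ => trivial
    calc (0:ℝ) = -(0:ℝ) := by norm_num
      _ ≤ _ := by
          rw [show (∑ z : X × Y × Strat Y Xh A,
            ((1-ν) * pXYT PX PW P z.1 z.2.1 z.2.2 * Real.logb 2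
              (((1-ν) * pXYT PX PW P z.1 z.2.1 z.2.2
                  * pYT PX PW (fun x t => (1-ν) * P x t + ν * dir t0 x t) z.2.1 z.2.2)
                / (pXYT PX PW (fun x t => (1-ν) * P x t + ν * dir t0 x t) z.1 z.2.1 z.2.2
                  * ((1-ν) * pYT PX PW P z.2.1 z.2.2)))
            + ν * pXYT PX PW (dir t0) z.1 z.2.1 z.2.2 * Real.logb 2
              ((ν * pXYT PX PW (dir t0) z.1 z.2.1 z.2.2
                  * pYT PX PW (fun x t => (1-ν) * P x t + ν * dir t0 x t) z.2.1 z.2.2)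
                / (pXYT PX PW (fun x t => (1-ν) * P x t + ν * dir t0 x t) z.1 z.2.1 z.2.2
                  * (ν * pYT PX PW (dir t0) z.2.1 z.2.2)))))
            = -(∑ z : X × Y × Strat Y Xh A,
            ((1-ν) * pXYT PX PW P z.1 z.2.1 z.2.2 * Real.logb 2
              ((pXYT PX PW (fun x t => (1-ν) * P x t + ν * dir t0 x t) z.1 z.2.1 z.2.2
                * ((1-ν) * pYT PX PW P z.2.1 z.2.2)
                / pYT PX PW (fun x t => (1-ν) * P x t + ν * dir t0 x t) z.2.1 z.2.2)
                / ((1-ν) * pXYT PX PW P z.1 z.2.1 z.2.2))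
            + ν * pXYT PX PW (dir t0) z.1 z.2.1 z.2.2 * Real.logb 2
              ((pXYT PX PW (fun x t => (1-ν) * P x t + ν * dir t0 x t) z.1 z.2.1 z.2.2
                * (ν * pYT PX PW (dir t0) z.2.1 z.2.2)
                / pYT PX PW (fun x t => (1-ν) * P x t + ν * dir t0 x t) z.2.1 z.2.2)
                / (ν * pXYT PX PW (dir t0) z.1 z.2.1 z.2.2)))) by
            rw [← Finset.sum_neg_distrib]
            exact Finset.sum_congr rfl (fun z _ => hflip z)]
          exact neg_le_neg hgp
  -- regroup the first correction sum and conclude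
  have r1 := regroup_ya (g := fun x y t => (1-ν) * pXYT PX PW P x y t)
    (h := fun y a => Real.logb 2
      (((1-ν) * pYA PX PW P y a * pA PX (fun x t => (1-ν) * P x t + ν * dir t0 x t) a)
        / ((1-ν) * pA PX P a * pYA PX PW (fun x t => (1-ν) * P x t + ν * dir t0 x t) y a)))
  have r2 := regroup_ya (g := fun x y t => ν * pXYT PX PW (dir t0) x y t)
    (h := fun y a => Real.logb 2
      ((ν * pYA PX PW (dir t0) y a * pA PX (fun x t => (1-ν) * P x t + ν * dir t0 x t) a)
        / ((ν * pA PX (dir t0) a)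
          * pYA PX PW (fun x t => (1-ν) * P x t + ν * dir t0 x t) y a)))
  simp only [sum_ite_scaled_pXYT] at r1 r2
  have hS1 : (0:ℝ) ≤ ∑ x, ∑ y, ∑ t,
      ((1-ν) * pXYT PX PW P x y t * Real.logb 2
        (((1-ν) * pYA PX PW P y t.2
            * pA PX (fun x t => (1-ν) * P x t + ν * dir t0 x t) t.2)
          / ((1-ν) * pA PX P t.2
            * pYA PX PW (fun x t => (1-ν) * P x t + ν * dir t0 x t) y t.2))
      + ν * pXYT PX PW (dir t0) x y t * Real.logb 2
        ((ν * pYA PX PW (dir t0) y t.2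
            * pA PX (fun x t => (1-ν) * P x t + ν * dir t0 x t) t.2)
          / ((ν * pA PX (dir t0) t.2)
            * pYA PX PW (fun x t => (1-ν) * P x t + ν * dir t0 x t) y t.2))) := by
    simp only [Finset.sum_add_distrib]
    rw [r1, r2]
    simp only [← Finset.sum_add_distrib]
    exact hI1
  linarith [key, hS1, hI2]



end Big2
end RDAux
namespace RDAux
set_option linter.unusedSectionVars false
section DistCost
variable {X Y A Xh : Type} [Fintype X] [Fintype Y] [Fintype A] [Fintype Xh]
  [DecidableEq X] [DecidableEq Y] [DecidableEq A] [DecidableEq Xh]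
variable (PX : X → ℝ) (PW : A → X → Y → ℝ) (dist : X → Xh → ℝ) (cost : A → ℝ)
  (PT : X → Strat Y Xh A → ℝ)

lemma expDist_nonneg (hPX : ∀ x, 0 ≤ PX x) (hPW : ∀ a x, IsPMF (PW a x))
    (hPT : ∀ x t, 0 ≤ PT x t) (hdist : ∀ x xh, 0 ≤ dist x xh) :
    0 ≤ expDist PX PW dist PT := by
  apply Finset.sum_nonneg; intro x _
  apply Finset.sum_nonneg; intro y _
  apply Finset.sum_nonneg; intro t _
  exact mul_nonneg (pXYT_nonneg PX PW PT hPX hPW hPT x y t) (hdist x (t.1 y))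

lemma expCost_nonneg (hPX : ∀ x, 0 ≤ PX x) (hPT : ∀ x t, 0 ≤ PT x t)
    (hcost : ∀ a, 0 ≤ cost a) : 0 ≤ expCost PX cost PT := by
  apply Finset.sum_nonneg; intro x _
  apply Finset.sum_nonneg; intro t _
  exact mul_nonneg (mul_nonneg (hPX x) (hPT x t)) (hcost t.2)

lemma expDist_dir (t0 : Strat Y Xh A) :
    expDist PX PW dist (dir t0) = ∑ x, ∑ y, PX x * PW t0.2 x y * dist x (t0.1 y) := by
  unfold expDist
  apply Finset.sum_congr rfl; intro x _
  apply Finset.sum_congr rfl; intro y _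
  rw [show (∑ t, pXYT PX PW (dir t0) x y t * dist x (t.1 y))
      = ∑ t : Strat Y Xh A, if t = t0 then PX x * PW t0.2 x y * dist x (t0.1 y) else 0 by
    apply Finset.sum_congr rfl; intro t _
    rw [pXYT_dir]
    by_cases h : t = t0
    · subst h; simp
    · simp [h]]
  rw [Finset.sum_ite_eq' Finset.univ t0]
  simp

lemma expCost_dir (hPX : IsPMF PX) (t0 : Strat Y Xh A) :
    expCost PX cost (dir t0) = cost t0.2 := by
  unfold expCost dir
  rw [show (∑ x, ∑ t, PX x * (if t = t0 then (1:ℝ) else 0) * cost t.2)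
      = ∑ x, ∑ t : Strat Y Xh A, if t = t0 then PX x * cost t0.2 else 0 by
    apply Finset.sum_congr rfl; intro x _
    apply Finset.sum_congr rfl; intro t _
    by_cases h : t = t0
    · subst h; simp
    · simp [h]]
  simp only [Finset.sum_ite_eq' Finset.univ t0, Finset.mem_univ, if_true]
  rw [← Finset.sum_mul, hPX.2, one_mul]

/-- every element of the `Dmax` feasible set is nonnegative -/
lemma Dmax_bddBelow (hPX : ∀ x, 0 ≤ PX x) (hPW : ∀ a x, IsPMF (PW a x))
    (hdist : ∀ x xh, 0 ≤ dist x xh) (C : ℝ) :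
    ∀ v ∈ { v : ℝ | ∃ pT : Strat Y Xh A → ℝ, IsPMF pT ∧
      (∑ t, cost t.2 * pT t) ≤ C ∧
      v = ∑ t, ∑ x, ∑ y, PX x * pT t * PW t.2 x y * dist x (t.1 y) }, 0 ≤ v := by
  rintro v ⟨pT, hpT, _, rfl⟩
  apply Finset.sum_nonneg; intro t _
  apply Finset.sum_nonneg; intro x _
  apply Finset.sum_nonneg; intro y _
  exact mul_nonneg (mul_nonneg (mul_nonneg (hPX x) (hpT.1 t)) ((hPW t.2 x).1 y))
    (hdist x (t.1 y))

/-- the Dirac product strategy with zero-cost action witnesses `Dmax ≤` its distortion. -/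
lemma Dmax_le_dir (hPX : ∀ x, 0 ≤ PX x) (hPW : ∀ a x, IsPMF (PW a x))
    (hdist : ∀ x xh, 0 ≤ dist x xh) (C : ℝ) (hC : 0 ≤ C) (t0 : Strat Y Xh A)
    (hc0 : cost t0.2 = 0) :
    Dmax PX PW dist cost C ≤ ∑ x, ∑ y, PX x * PW t0.2 x y * dist x (t0.1 y) := by
  apply csInf_le
  · exact ⟨0, Dmax_bddBelow PX PW dist cost hPX hPW hdist C⟩
  · refine ⟨fun t => if t = t0 then 1 else 0, ⟨fun t => by by_cases h : t = t0 <;> simp [h], by simp⟩,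
      ?_, ?_⟩
    · rw [show (∑ t : Strat Y Xh A, cost t.2 * if t = t0 then (1:ℝ) else 0)
          = ∑ t : Strat Y Xh A, if t = t0 then cost t0.2 else 0 by
        apply Finset.sum_congr rfl; intro t _
        by_cases h : t = t0
        · subst h; simp
        · simp [h]]
      rw [Finset.sum_ite_eq' Finset.univ t0]
      simpa [hc0] using hC
    · rw [show (∑ t : Strat Y Xh A, ∑ x, ∑ y,
          PX x * (if t = t0 then (1:ℝ) else 0) * PW t.2 x y * dist x (t.1 y))
          = ∑ t : Strat Y Xh A, if t = t0 then
              (∑ x, ∑ y, PX x * PW t0.2 x y * dist x (t0.1 y)) else 0 by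
        apply Finset.sum_congr rfl; intro t _
        by_cases h : t = t0
        · subst h; simp
        · simp [h]]
      rw [Finset.sum_ite_eq' Finset.univ t0]
      simp

end DistCost
end RDAux
namespace RDAux
set_option linter.unusedSectionVars false
set_option maxHeartbeats 1000000
section Topo
variable {X Y A Xh : Type} [Fintype X] [Fintype Y] [Fintype A] [Fintype Xh]
  [DecidableEq X] [DecidableEq Y] [DecidableEq A] [DecidableEq Xh]
variable (PX : X → ℝ) (PW : A → X → Y → ℝ)

private lemma c0 (x : X) (t : Strat Y Xh A) :
    Continuous fun PT : X → Strat Y Xh A → ℝ => PT x t :=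
  (continuous_apply t).comp (continuous_apply x)

lemma cXYT (x : X) (y : Y) (t : Strat Y Xh A) :
    Continuous fun PT : X → Strat Y Xh A → ℝ => pXYT PX PW PT x y t := by
  show Continuous fun PT : X → Strat Y Xh A → ℝ => PX x * PT x t * PW t.2 x y
  exact (continuous_const.mul (c0 x t)).mul continuous_const

lemma cXA (x : X) (a : A) :
    Continuous fun PT : X → Strat Y Xh A → ℝ => pXA PX PT x a := by
  show Continuous fun PT : X → Strat Y Xh A → ℝ =>
    ∑ t, if t.2 = a then PX x * PT x t else 0
  apply continuous_finset_sum
  intro t _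
  by_cases h : t.2 = a
  · simp only [if_pos h]
    exact continuous_const.mul (c0 x t)
  · simp only [if_neg h]
    exact continuous_const

lemma cA (a : A) : Continuous fun PT : X → Strat Y Xh A → ℝ => pA PX PT a := by
  have : (fun PT : X → Strat Y Xh A → ℝ => pA PX PT a)
      = fun PT => ∑ x, pXA PX PT x a := rfl
  rw [this]
  exact continuous_finset_sum _ (fun x _ => cXA PX x a)

lemma cYT (y : Y) (t : Strat Y Xh A) :
    Continuous fun PT : X → Strat Y Xh A → ℝ => pYT PX PW PT y t := by
  have : (fun PT : X → Strat Y Xh A → ℝ => pYT PX PW PT y t)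
      = fun PT => ∑ x, pXYT PX PW PT x y t := rfl
  rw [this]
  exact continuous_finset_sum _ (fun x _ => cXYT PX PW x y t)

lemma cXYA (x : X) (y : Y) (a : A) :
    Continuous fun PT : X → Strat Y Xh A → ℝ => pXYA PX PW PT x y a := by
  show Continuous fun PT : X → Strat Y Xh A → ℝ =>
    ∑ t, if t.2 = a then pXYT PX PW PT x y t else 0
  apply continuous_finset_sum
  intro t _
  by_cases h : t.2 = a
  · simp only [if_pos h]; exact cXYT PX PW x y t
  · simp only [if_neg h]; exact continuous_const

lemma cYA (y : Y) (a : A) :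
    Continuous fun PT : X → Strat Y Xh A → ℝ => pYA PX PW PT y a := by
  show Continuous fun PT : X → Strat Y Xh A → ℝ =>
    ∑ x, ∑ t, if t.2 = a then pXYT PX PW PT x y t else 0
  apply continuous_finset_sum
  intro x _
  apply continuous_finset_sum
  intro t _
  by_cases h : t.2 = a
  · simp only [if_pos h]; exact cXYT PX PW x y t
  · simp only [if_neg h]; exact continuous_const

lemma cDist (dist : X → Xh → ℝ) :
    Continuous fun PT : X → Strat Y Xh A → ℝ => expDist PX PW dist PT := by
  show Continuous fun PT : X → Strat Y Xh A → ℝ =>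
    ∑ x, ∑ y, ∑ t, pXYT PX PW PT x y t * dist x (t.1 y)
  refine continuous_finset_sum _ fun x _ => continuous_finset_sum _ fun y _ =>
    continuous_finset_sum _ fun t _ => (cXYT PX PW x y t).mul continuous_const

lemma cCost (cost : A → ℝ) :
    Continuous fun PT : X → Strat Y Xh A → ℝ => expCost PX cost PT := by
  show Continuous fun PT : X → Strat Y Xh A → ℝ => ∑ x, ∑ t, PX x * PT x t * cost t.2
  refine continuous_finset_sum _ fun x _ => continuous_finset_sum _ fun t _ => ?_
  exact (continuous_const.mul (c0 x t)).mul continuous_const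

/-- continuity of `u * logb v` on a set where `0 ≤ u ≤ v`. -/
lemma contOn_u_logb_v {u v : (X → Strat Y Xh A → ℝ) → ℝ} (hu : Continuous u)
    (hv : Continuous v) {S : Set (X → Strat Y Xh A → ℝ)}
    (h : ∀ P ∈ S, 0 ≤ u P ∧ u P ≤ v P) :
    ContinuousOn (fun P => u P * Real.logb 2 (v P)) S := by
  have := contOn_mul_logb.comp (f := fun P => (u P, v P)) (hu.prodMk hv).continuousOn
    (fun P hP => h P hP)
  exact this

/-- Expansion of `IXA` into entropy-style terms, valid when the entries are nonnegative. -/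
lemma IXA_expand (hPXpos : ∀ x, 0 < PX x) (hPW : ∀ a x, IsPMF (PW a x))
    (PT : X → Strat Y Xh A → ℝ) (hnn : ∀ x t, 0 ≤ PT x t) :
    IXA PX PT = ∑ x, ∑ a, (pXA PX PT x a * Real.logb 2 (pXA PX PT x a)
      - pXA PX PT x a * Real.logb 2 (PX x)
      - pXA PX PT x a * Real.logb 2 (pA PX PT a)) := by
  have hPX' : ∀ x, 0 ≤ PX x := fun x => (hPXpos x).le
  unfold IXA
  apply Finset.sum_congr rfl; intro x _
  apply Finset.sum_congr rfl; intro a _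
  by_cases h : pXA PX PT x a = 0
  · rw [h]; ring
  · have h2 : 0 < pXA PX PT x a :=
      lt_of_le_of_ne (pXA_nonneg PX PW PT hPX' hPW hnn x a) (Ne.symm h)
    have h3 : 0 < pA PX PT a := lt_of_lt_of_le h2 (pXA_le_pA PX PW PT hPX' hPW hnn x a)
    have h4 := hPXpos x
    rw [Real.logb_div (ne_of_gt h2) (by positivity), Real.logb_mul (ne_of_gt h4) (ne_of_gt h3)]
    ring

lemma IXT_expand (hPXpos : ∀ x, 0 < PX x) (hPW : ∀ a x, IsPMF (PW a x))
    (PT : X → Strat Y Xh A → ℝ) (hnn : ∀ x t, 0 ≤ PT x t) :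
    IXTcondYA PX PW PT = ∑ x, ∑ y, ∑ t,
      (pXYT PX PW PT x y t * Real.logb 2 (pXYT PX PW PT x y t)
      + pXYT PX PW PT x y t * Real.logb 2 (pYA PX PW PT y t.2)
      - pXYT PX PW PT x y t * Real.logb 2 (pXYA PX PW PT x y t.2)
      - pXYT PX PW PT x y t * Real.logb 2 (pYT PX PW PT y t)) := by
  have hPX' : ∀ x, 0 ≤ PX x := fun x => (hPXpos x).le
  unfold IXTcondYA
  apply Finset.sum_congr rfl; intro x _
  apply Finset.sum_congr rfl; intro y _
  apply Finset.sum_congr rfl; intro t _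
  by_cases h : pXYT PX PW PT x y t = 0
  · rw [h]; ring
  · have h2 : 0 < pXYT PX PW PT x y t :=
      lt_of_le_of_ne (pXYT_nonneg PX PW PT hPX' hPW hnn x y t) (Ne.symm h)
    have h3 : 0 < pXYA PX PW PT x y t.2 :=
      lt_of_lt_of_le h2 (pXYT_le_pXYA PX PW PT hPX' hPW hnn x y t)
    have h4 : 0 < pYA PX PW PT y t.2 :=
      lt_of_lt_of_le h3 (pXYA_le_pYA PX PW PT hPX' hPW hnn x y t.2)
    have h5 : 0 < pYT PX PW PT y t :=
      lt_of_lt_of_le h2 (pXYT_le_pYT PX PW PT hPX' hPW hnn x y t)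
    rw [Real.logb_div (by positivity) (by positivity),
      Real.logb_mul (ne_of_gt h2) (ne_of_gt h4), Real.logb_mul (ne_of_gt h3) (ne_of_gt h5)]
    ring

lemma J_contOn (hPXpos : ∀ x, 0 < PX x) (hPW : ∀ a x, IsPMF (PW a x)) :
    ContinuousOn (fun PT : X → Strat Y Xh A → ℝ => IXA PX PT + IXTcondYA PX PW PT)
      {PT : X → Strat Y Xh A → ℝ | ∀ x t, 0 ≤ PT x t} := by
  have hPX' : ∀ x, 0 ≤ PX x := fun x => (hPXpos x).le
  apply ContinuousOn.congr (f := fun PT =>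
    (∑ x, ∑ a, (pXA PX PT x a * Real.logb 2 (pXA PX PT x a)
      - pXA PX PT x a * Real.logb 2 (PX x)
      - pXA PX PT x a * Real.logb 2 (pA PX PT a)))
    + (∑ x, ∑ y, ∑ t,
      (pXYT PX PW PT x y t * Real.logb 2 (pXYT PX PW PT x y t)
      + pXYT PX PW PT x y t * Real.logb 2 (pYA PX PW PT y t.2)
      - pXYT PX PW PT x y t * Real.logb 2 (pXYA PX PW PT x y t.2)
      - pXYT PX PW PT x y t * Real.logb 2 (pYT PX PW PT y t))))
  · apply ContinuousOn.add
    · apply continuousOn_finset_sum; intro x _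
      apply continuousOn_finset_sum; intro a _
      apply ContinuousOn.sub
      apply ContinuousOn.sub
      · exact contOn_u_logb_v (cXA PX x a) (cXA PX x a)
          (fun P hP => ⟨pXA_nonneg PX PW P hPX' hPW hP x a, le_refl _⟩)
      · exact ((cXA PX x a).mul continuous_const).continuousOn
      · exact contOn_u_logb_v (cXA PX x a) (cA PX a)
          (fun P hP => ⟨pXA_nonneg PX PW P hPX' hPW hP x a,
            pXA_le_pA PX PW P hPX' hPW hP x a⟩)
    · apply continuousOn_finset_sum; intro x _
      apply continuousOn_finset_sum; intro y _
      apply continuousOn_finset_sum; intro t _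
      apply ContinuousOn.sub
      apply ContinuousOn.sub
      apply ContinuousOn.add
      · exact contOn_u_logb_v (cXYT PX PW x y t) (cXYT PX PW x y t)
          (fun P hP => ⟨pXYT_nonneg PX PW P hPX' hPW hP x y t, le_refl _⟩)
      · exact contOn_u_logb_v (cXYT PX PW x y t) (cYA PX PW y t.2)
          (fun P hP => ⟨pXYT_nonneg PX PW P hPX' hPW hP x y t,
            le_trans (pXYT_le_pXYA PX PW P hPX' hPW hP x y t)
              (pXYA_le_pYA PX PW P hPX' hPW hP x y t.2)⟩)
      · exact contOn_u_logb_v (cXYT PX PW x y t) (cXYA PX PW x y t.2)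
          (fun P hP => ⟨pXYT_nonneg PX PW P hPX' hPW hP x y t,
            pXYT_le_pXYA PX PW P hPX' hPW hP x y t⟩)
      · exact contOn_u_logb_v (cXYT PX PW x y t) (cYT PX PW y t)
          (fun P hP => ⟨pXYT_nonneg PX PW P hPX' hPW hP x y t,
            pXYT_le_pYT PX PW P hPX' hPW hP x y t⟩)
  · intro P hP
    simp only []
    rw [IXA_expand PX PW hPXpos hPW P hP, IXT_expand PX PW hPXpos hPW P hP]

lemma K_compact (dist : X → Xh → ℝ) (cost : A → ℝ) (D C : ℝ) :
    IsCompact {PT : X → Strat Y Xh A → ℝ | IsCondPMF PT ∧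
      expDist PX PW dist PT = D ∧ expCost PX cost PT ≤ C} := by
  apply IsCompact.of_isClosed_subset
    (isCompact_univ_pi (fun _ : X => isCompact_univ_pi (fun _ : Strat Y Xh A => isCompact_Icc
      (a := (0:ℝ)) (b := 1))))
  · rw [show {PT : X → Strat Y Xh A → ℝ | IsCondPMF PT ∧
        expDist PX PW dist PT = D ∧ expCost PX cost PT ≤ C}
        = {PT : X → Strat Y Xh A → ℝ | IsCondPMF PT}
          ∩ ({PT : X → Strat Y Xh A → ℝ | expDist PX PW dist PT = D}
            ∩ {PT : X → Strat Y Xh A → ℝ | expCost PX cost PT ≤ C}) from rfl]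
    apply IsClosed.inter
    · have : {PT : X → Strat Y Xh A → ℝ | IsCondPMF PT}
          = (⋂ x, ⋂ t, {PT : X → Strat Y Xh A → ℝ | 0 ≤ PT x t})
            ∩ (⋂ x, {PT : X → Strat Y Xh A → ℝ | ∑ t, PT x t = 1}) := by
        ext PT
        constructor
        · intro h
          exact ⟨Set.mem_iInter.mpr fun x => Set.mem_iInter.mpr fun t => (h x).1 t,
            Set.mem_iInter.mpr fun x => (h x).2⟩
        · rintro ⟨h1, h2⟩ x
          exact ⟨fun t => Set.mem_iInter.mp (Set.mem_iInter.mp h1 x) t,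
            Set.mem_iInter.mp h2 x⟩
      rw [this]
      apply IsClosed.inter
      · exact isClosed_iInter fun x => isClosed_iInter fun t =>
          isClosed_le continuous_const (c0 x t)
      · exact isClosed_iInter fun x => isClosed_eq
          (continuous_finset_sum _ fun t _ => c0 x t) continuous_const
    · exact IsClosed.inter (isClosed_eq (cDist PX PW dist) continuous_const)
        (isClosed_le (cCost PX cost) continuous_const)
  · intro PT hPT
    rw [Set.mem_univ_pi]
    intro x
    rw [Set.mem_univ_pi]
    intro t
    refine ⟨(hPT.1 x).1 t, ?_⟩
    calc PT x t ≤ ∑ t', PT x t' :=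
          Finset.single_le_sum (fun t' _ => (hPT.1 x).1 t') (Finset.mem_univ t)
      _ = 1 := (hPT.1 x).2
end Topo
end RDAux
open RDAux in
/-- For every `C ≥ 0` and every `D ∈ [0, D_max(C)]`, the minimum
defining `R(D,C)` is attained by a conditional pmf `P_{T|X}` meeting the distortion
constraint with equality. -/
theorem RDC_attained_with_distortion_equality
    {X Y A Xh : Type} [Fintype X] [Fintype Y] [Fintype A] [Fintype Xh]
    [DecidableEq X] [DecidableEq Y] [DecidableEq A] [DecidableEq Xh]
    [Nonempty X] [Nonempty Y] [Nonempty A] [Nonempty Xh]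
    (PX : X → ℝ) (PW : A → X → Y → ℝ) (dist : X → Xh → ℝ) (cost : A → ℝ)
    (hPX : IsPMF PX) (hPXpos : ∀ x, 0 < PX x)
    (hPW : ∀ a x, IsPMF (PW a x))
    (hdist : ∀ x xh, 0 ≤ dist x xh) (hdist0 : ∀ x, ∃ xh, dist x xh = 0)
    (hcost : ∀ a, 0 ≤ cost a) (hcost0 : ∃ a, cost a = 0)
    (C D : ℝ) (hC : 0 ≤ C) (hD : 0 ≤ D) (hDmax : D ≤ Dmax PX PW dist cost C) :
    ∃ PT : X → Strat Y Xh A → ℝ, IsCondPMF PT ∧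
      expDist PX PW dist PT = D ∧ expCost PX cost PT ≤ C ∧
      IXA PX PT + IXTcondYA PX PW PT = RDC PX PW dist cost D C := by
  classical
  have hPX' : ∀ x, 0 ≤ PX x := fun x => (hPXpos x).le
  obtain ⟨a0, ha0⟩ := hcost0
  -- the reference dirac strategy with zero cost
  set t1 : Strat Y Xh A := (fun _ : Y => Classical.arbitrary Xh, a0) with ht1
  set DQ : ℝ := expDist PX PW dist (dir t1) with hDQ
  have hc1 : cost t1.2 = 0 := ha0
  have hDQD : D ≤ DQ := by
    rw [hDQ, expDist_dir]
    exact le_trans hDmax (Dmax_le_dir PX PW dist cost hPX' hPW hdist C hC t1 hc1)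
  have hDQnn : 0 ≤ DQ := le_trans hD hDQD
  have hQcond : IsCondPMF (dir (X := X) (Y := Y) (Xh := Xh) (A := A) t1) := dir_cond t1
  have hQ' : ∀ x t, 0 ≤ dir (X := X) (Y := Y) (Xh := Xh) (A := A) t1 x t :=
    fun x t => ((hQcond x).1 t)
  have hCQ : expCost PX cost (dir t1) = 0 := by
    rw [expCost_dir PX cost hPX t1, hc1]
  -- the zero-distortion strategy
  set g0 : X → Strat Y Xh A := fun x => (fun _ : Y => Classical.choose (hdist0 x), a0)
    with hg0
  set P0 : X → Strat Y Xh A → ℝ := fun x t => if t = g0 x then 1 else 0 with hP0def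
  have hP0 : IsCondPMF P0 := by
    intro x
    constructor
    · intro t
      rw [hP0def]
      by_cases h : t = g0 x <;> simp [h]
    · rw [hP0def]
      simp
  have hP0' : ∀ x t, 0 ≤ P0 x t := fun x t => ((hP0 x).1 t)
  have hD0 : expDist PX PW dist P0 = 0 := by
    apply Finset.sum_eq_zero; intro x _
    apply Finset.sum_eq_zero; intro y _
    apply Finset.sum_eq_zero; intro t _
    by_cases h : t = g0 x
    · subst h
      have : dist x ((g0 x).1 y) = 0 := by
        rw [hg0]
        exact Classical.choose_spec (hdist0 x)
      rw [this, mul_zero]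
    · rw [show pXYT PX PW P0 x y t = 0 by
        unfold pXYT
        rw [hP0def]
        simp [h]]
      rw [zero_mul]
  have hC0 : expCost PX cost P0 = 0 := by
    apply Finset.sum_eq_zero; intro x _
    apply Finset.sum_eq_zero; intro t _
    by_cases h : t = g0 x
    · subst h
      rw [show cost (g0 x).2 = 0 from ha0, mul_zero]
    · rw [hP0def]
      simp [h]
  -- the feasible set with distortion equality is nonempty
  set ν1 : ℝ := if DQ = 0 then 0 else D / DQ with hν1
  have hν1a : 0 ≤ ν1 := by
    rw [hν1]; split_ifs with h
    · exact le_refl 0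
    · exact div_nonneg hD hDQnn
  have hν1b : ν1 ≤ 1 := by
    rw [hν1]; split_ifs with h
    · norm_num
    · rw [div_le_one (lt_of_le_of_ne hDQnn (Ne.symm h))]
      exact hDQD
  set Pinit : X → Strat Y Xh A → ℝ := fun x t => (1-ν1) * P0 x t + ν1 * dir t1 x t
    with hPinit
  have hPinitK : IsCondPMF Pinit ∧ expDist PX PW dist Pinit = D ∧
      expCost PX cost Pinit ≤ C := by
    refine ⟨mix_cond P0 (dir t1) (1-ν1) ν1 hP0 hQcond (by linarith) hν1a (by ring), ?_, ?_⟩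
    · rw [hPinit, expDist_mix PX PW P0 (dir t1) (1-ν1) ν1 dist, hD0, mul_zero, zero_add]
      rw [hν1]
      split_ifs with h
      · rw [zero_mul]
        linarith [hDQD, hD]
      · rw [← hDQ]
        field_simp
    · rw [hPinit, expCost_mix PX P0 (dir t1) (1-ν1) ν1 cost, hC0, mul_zero, zero_add, hCQ,
        mul_zero]
      exact hC
  -- minimize the rate over the compact feasible set
  obtain ⟨Pm, hPmK, hPmmin⟩ :=
    (K_compact PX PW dist cost D C).exists_isMinOn ⟨Pinit, hPinitK⟩
      ((J_contOn PX PW hPXpos hPW).mono (fun P hP x t => (hP.1 x).1 t))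
  have hPmcond : IsCondPMF Pm := hPmK.1
  have hPmD : expDist PX PW dist Pm = D := hPmK.2.1
  have hPmC : expCost PX cost Pm ≤ C := hPmK.2.2
  refine ⟨Pm, hPmcond, hPmD, hPmC, ?_⟩
  -- identify the minimum with the infimum
  have hmem : IXA PX Pm + IXTcondYA PX PW Pm ∈
      { r : ℝ | ∃ PT : X → Strat Y Xh A → ℝ, IsCondPMF PT ∧
        expDist PX PW dist PT ≤ D ∧ expCost PX cost PT ≤ C ∧
        r = IXA PX PT + IXTcondYA PX PW PT } :=
    ⟨Pm, hPmcond, le_of_eq hPmD, hPmC, rfl⟩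
  have hlb : ∀ r ∈ { r : ℝ | ∃ PT : X → Strat Y Xh A → ℝ, IsCondPMF PT ∧
      expDist PX PW dist PT ≤ D ∧ expCost PX cost PT ≤ C ∧
      r = IXA PX PT + IXTcondYA PX PW PT },
      IXA PX Pm + IXTcondYA PX PW Pm ≤ r := by
    rintro r ⟨P', hP', hd', hc', rfl⟩
    have hP'' : ∀ x t, 0 ≤ P' x t := fun x t => ((hP' x).1 t)
    have hD'nn : 0 ≤ expDist PX PW dist P' :=
      expDist_nonneg PX PW dist P' hPX' hPW hP'' hdist
    have hC'nn : 0 ≤ expCost PX cost P' :=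
      expCost_nonneg PX cost P' hPX' hP'' hcost
    set D' : ℝ := expDist PX PW dist P' with hD'
    have hD'DQ : D' ≤ DQ := le_trans hd' hDQD
    set ν2 : ℝ := if DQ = D' then 0 else (D - D') / (DQ - D') with hν2
    have hν2a : 0 ≤ ν2 := by
      rw [hν2]; split_ifs with h
      · exact le_refl 0
      · have : D' < DQ := lt_of_le_of_ne hD'DQ (Ne.symm h)
        have h1 : 0 ≤ D - D' := by linarith
        have h2 : 0 < DQ - D' := by linarith
        exact div_nonneg h1 h2.le
    have hν2b : ν2 ≤ 1 := by
      rw [hν2]; split_ifs with h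
      · norm_num
      · have : D' < DQ := lt_of_le_of_ne hD'DQ (Ne.symm h)
        rw [div_le_one (by linarith)]
        linarith
    have hmixK : IsCondPMF (fun x t => (1-ν2) * P' x t + ν2 * dir t1 x t) ∧
        expDist PX PW dist (fun x t => (1-ν2) * P' x t + ν2 * dir t1 x t) = D ∧
        expCost PX cost (fun x t => (1-ν2) * P' x t + ν2 * dir t1 x t) ≤ C := by
      refine ⟨mix_cond P' (dir t1) (1-ν2) ν2 hP' hQcond (by linarith) hν2a (by ring), ?_, ?_⟩
      · rw [expDist_mix PX PW P' (dir t1) (1-ν2) ν2 dist, ← hD', ← hDQ]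
        rw [hν2]
        split_ifs with h
        · have : D = D' := le_antisymm (by rw [h] at hDQD; exact hDQD) hd'
          rw [this]; ring
        · have hne : DQ - D' ≠ 0 := fun hc => h (by linarith)
          field_simp
          ring
      · rw [expCost_mix PX P' (dir t1) (1-ν2) ν2 cost, hCQ, mul_zero, add_zero]
        calc (1-ν2) * expCost PX cost P' ≤ 1 * expCost PX cost P' := by nlinarith
          _ ≤ C := by rw [one_mul]; exact hc'
    have hmin := hPmmin hmixK
    have hconv := mix_rate_le PX PW P' t1 ν2 hPX hPXpos hPW hP' hν2a hν2b
    have hJnn : 0 ≤ IXA PX P' + IXTcondYA PX PW P' :=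
      add_nonneg (IXA_nonneg PX PW P' hPX hPXpos hPW hP')
        (IXTcondYA_nonneg PX PW P' hPX hPXpos hPW hP')
    have : IXA PX Pm + IXTcondYA PX PW Pm
        ≤ (1-ν2) * (IXA PX P' + IXTcondYA PX PW P') := le_trans hmin hconv
    nlinarith
  unfold RDC
  exact le_antisymm
    (le_csInf ⟨_, hmem⟩ hlb)
    (csInf_le ⟨IXA PX Pm + IXTcondYA PX PW Pm, hlb⟩ hmem)
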